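/- arXiv:2404.00222 — 5 statements merged into one kernel-verified Lean document; each statement's English description precedes it below -/
import Mathlib

section
/- Let q = 2^k for a positive integer k, and let f : F_q → F_q be a function on the finite field with q elements. Then f preserves positivity on M_2(F_q) if and only if f is a bijective monomial, i.e., there exist c ∈ F_q with c ≠ 0 and an integer n with 1 ≤ n ≤ q−1 and gcd(n, q−1) = 1 such that f(x) = c·x^n for all x ∈ F_q. -/
/-- An element of a field is *positive* if it is a nonzero square. -/
def IsPos {F : Type*} [Field F] (x : F) : Prop := ∃ y : F, y ≠ 0 ∧ y ^ 2 = x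

/-- The `r`-th leading principal minor of a square matrix (the determinant of the
top-left `(r+1) × (r+1)` submatrix). -/
def leadingMinor {F : Type*} [CommRing F] {n : ℕ} (A : Matrix (Fin n) (Fin n) F)
    (r : Fin n) : F :=
  (A.submatrix (Fin.castLE r.isLt) (Fin.castLE r.isLt)).det

/-- A matrix over a finite field is positive definite if it is symmetric and all its
leading principal minors are positive (nonzero squares). -/
def IsPosDef {F : Type*} [Field F] {n : ℕ} (A : Matrix (Fin n) (Fin n) F) : Prop :=
  A.IsSymm ∧ ∀ r : Fin n, IsPos (leadingMinor A r)

/-- The entrywise application `f[A]` of `f` to the matrix `A`. -/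
def entrywiseMap {F : Type*} {n : ℕ} (f : F → F) (A : Matrix (Fin n) (Fin n) F) :
    Matrix (Fin n) (Fin n) F := Matrix.of fun i j => f (A i j)

/-- `f` preserves positivity on `n × n` matrices. -/
def PreservesPos {F : Type*} [Field F] (n : ℕ) (f : F → F) : Prop :=
  ∀ A : Matrix (Fin n) (Fin n) F, IsPosDef A → IsPosDef (entrywiseMap f A)

section StmtHelpers
set_option linter.unusedSectionVars false

variable {F : Type*} [Field F] [Fintype F]

lemma stmt0_char_two (k : ℕ) (hk : 1 ≤ k) (hcard : Fintype.card F = 2 ^ k) : (2 : F) = 0 := by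
  have h : ((2 ^ k : ℕ) : F) = 0 := by rw [← hcard]; exact FiniteField.cast_card_eq_zero F
  push_cast at h
  exact pow_eq_zero_iff (by omega) |>.mp h

lemma stmt0_sq_inj (h2 : (2 : F) = 0) : Function.Injective fun x : F => x ^ 2 := by
  intro x y hxy
  simp only at hxy
  have h : (x - y) ^ 2 = 0 := by
    have h1 : (x - y) ^ 2 = x ^ 2 - 2 * (x * y) + y ^ 2 := by ring
    rw [h1, hxy]
    have h3 : y ^ 2 - 2 * (x * y) + y ^ 2 = 2 * (y ^ 2 - x * y) := by ring
    rw [h3, h2]; ring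
  exact sub_eq_zero.mp (pow_eq_zero_iff (n := 2) (by omega) |>.mp h)

lemma stmt0_sq_surj (h2 : (2 : F) = 0) : Function.Surjective fun x : F => x ^ 2 :=
  Finite.surjective_of_injective (stmt0_sq_inj h2)

lemma stmt0_isPos_iff (h2 : (2 : F) = 0) (x : F) : IsPos x ↔ x ≠ 0 := by
  constructor
  · rintro ⟨y, hy, rfl⟩; exact pow_ne_zero _ hy
  · intro hx
    obtain ⟨y, hy⟩ := stmt0_sq_surj h2 x
    exact ⟨y, fun h => hx (by simp [← hy, h]), hy⟩

lemma stmt0_lm0 (A : Matrix (Fin 2) (Fin 2) F) : leadingMinor A 0 = A 0 0 := by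
  simp [leadingMinor, Matrix.det_fin_one]

lemma stmt0_lm1 (A : Matrix (Fin 2) (Fin 2) F) :
    leadingMinor A 1 = A 0 0 * A 1 1 - A 0 1 * A 1 0 := by
  simp [leadingMinor, Matrix.det_fin_two]

lemma stmt0_isPosDef_iff (h2 : (2 : F) = 0) (A : Matrix (Fin 2) (Fin 2) F) :
    IsPosDef A ↔ A.IsSymm ∧ A 0 0 ≠ 0 ∧ A 0 0 * A 1 1 - A 0 1 * A 1 0 ≠ 0 := by
  unfold IsPosDef
  rw [Fin.forall_fin_two, stmt0_lm0, stmt0_lm1, stmt0_isPos_iff h2, stmt0_isPos_iff h2]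

lemma stmt0_pow_inj {n : ℕ} (hn : 1 ≤ n) (hg : Nat.gcd n (Fintype.card F - 1) = 1) :
    Function.Injective fun x : F => x ^ n := by
  classical
  intro x y hxy
  simp only at hxy
  rcases eq_or_ne x 0 with rfl | hx
  · rw [zero_pow (by omega), eq_comm, pow_eq_zero_iff (by omega)] at hxy
    exact hxy.symm
  rcases eq_or_ne y 0 with rfl | hy
  · rw [zero_pow (by omega), pow_eq_zero_iff (by omega)] at hxy
    exact hxy
  set u := Units.mk0 x hx with hu
  set v := Units.mk0 y hy with hv
  have huv : u ^ n = v ^ n := by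
    ext; simp [hu, hv, hxy]
  have h1 : (u * v⁻¹) ^ n = 1 := by
    rw [mul_pow, huv, inv_pow]
    simp
  have hord : orderOf (u * v⁻¹) ∣ n := orderOf_dvd_of_pow_eq_one h1
  have hord2 : orderOf (u * v⁻¹) ∣ Fintype.card F - 1 := by
    rw [← Fintype.card_units]; exact orderOf_dvd_card
  have : orderOf (u * v⁻¹) ∣ 1 := hg ▸ Nat.dvd_gcd hord hord2
  have huv1 : u * v⁻¹ = 1 := orderOf_eq_one_iff.mp (Nat.dvd_one.mp this)
  have := mul_inv_eq_one.mp huv1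
  simpa [hu, hv] using congrArg Units.val this

end StmtHelpers

/-- over `F = 𝔽_{2^k}`, `f` preserves positivity on `M_2(F)` iff `f` is a
bijective monomial `x ↦ c x^n` with `c ≠ 0`, `1 ≤ n ≤ q − 1`, and `gcd(n, q−1) = 1`. -/
theorem stmt0 {F : Type*} [Field F] [Fintype F] (k : ℕ) (hk : 1 ≤ k)
    (hcard : Fintype.card F = 2 ^ k) (f : F → F) :
    PreservesPos 2 f ↔
      ∃ (c : F) (n : ℕ), c ≠ 0 ∧ 1 ≤ n ∧ n ≤ 2 ^ k - 1 ∧ Nat.gcd n (2 ^ k - 1) = 1 ∧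
        ∀ x : F, f x = c * x ^ n := by
  classical
  have h2 : (2 : F) = 0 := stmt0_char_two k hk hcard
  have hq2 : 2 ≤ Fintype.card F := by
    rw [hcard]; exact Nat.one_lt_pow (by omega) (by omega)
  constructor
  · intro H
    -- key fact extracted from positivity preservation
    have K : ∀ a b d : F, a ≠ 0 → a * d - b * b ≠ 0 →
        f a ≠ 0 ∧ f a * f d - f b * f b ≠ 0 := by
      intro a b d ha hdet
      have hA : IsPosDef !![a, b; b, d] := by
        rw [stmt0_isPosDef_iff h2]
        refine ⟨?_, by simpa using ha, by simpa using hdet⟩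
        unfold Matrix.IsSymm
        ext i j
        fin_cases i <;> fin_cases j <;> simp
      have hfA := H _ hA
      rw [stmt0_isPosDef_iff h2] at hfA
      obtain ⟨-, hA1, hA3⟩ := hfA
      exact ⟨by simpa [entrywiseMap] using hA1, by simpa [entrywiseMap] using hA3⟩
    have hf0 : ∀ a : F, a ≠ 0 → f a ≠ 0 := by
      intro a ha
      exact (K a 0 1 ha (by simpa using ha)).1
    -- main implication
    have C : ∀ a b d : F, a ≠ 0 → f a * f d = f b * f b → a * d = b * b := by
      intro a b d ha h
      by_contra hne
      exact (K a b d ha (sub_ne_zero.mpr hne)).2 (sub_eq_zero.mpr h)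
    -- injectivity on nonzero elements
    have hinj' : ∀ x y : F, x ≠ 0 → f x = f y → x = y := by
      intro x y hx hfe
      have h1 : f x * f y = f x * f x := by rw [hfe]
      exact (mul_left_cancel₀ hx (C x x y hx h1)).symm
    -- f 0 = 0
    have hF0 : f 0 = 0 := by
      by_contra h0
      have hne : ∀ x : F, x ≠ 0 → f 0 ≠ f x := by
        intro x hx heq
        have hd : x * 0 - x * x ≠ 0 := by
          intro h
          apply mul_ne_zero hx hx
          have : x * x = -(x * 0 - x * x) := by ring
          rw [this, h]; ring
        exact (K x x 0 hx hd).2 (by rw [heq]; ring)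
      -- injective map from F \ {0} into F \ {0, f 0}, contradiction on cardinality
      have hmaps : ∀ x ∈ Finset.univ.erase (0 : F),
          f x ∈ (Finset.univ.erase (0 : F)).erase (f 0) := by
        intro x hx
        have hx0 : x ≠ 0 := Finset.ne_of_mem_erase hx
        exact Finset.mem_erase.mpr ⟨(hne x hx0).symm,
          Finset.mem_erase.mpr ⟨hf0 x hx0, Finset.mem_univ _⟩⟩
      have hinjOn : Set.InjOn f (Finset.univ.erase (0 : F)) := by
        intro x hx y hy hxy
        have hx0 : x ≠ 0 := by simpa using hx
        exact hinj' x y hx0 hxy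
      have hcle := Finset.card_le_card_of_injOn f hmaps hinjOn
      rw [Finset.card_erase_of_mem (Finset.mem_univ _), Finset.card_univ,
        Finset.card_erase_of_mem
          (Finset.mem_erase.mpr ⟨h0, Finset.mem_univ _⟩),
        Finset.card_erase_of_mem (Finset.mem_univ _), Finset.card_univ] at hcle
      omega
    -- f is bijective
    have hinj : Function.Injective f := by
      intro x y h
      rcases eq_or_ne x 0 with rfl | hx
      · rcases eq_or_ne y 0 with rfl | hy
        · rfl
        · exact absurd (by rw [← h, hF0]) (hf0 y hy)
      · exact hinj' x y hx h
    have hsurj : Function.Surjective f := Finite.surjective_of_injective hinj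
    set c := f 1 with hc
    have hc0 : c ≠ 0 := hf0 1 one_ne_zero
    -- key multiplicative relation
    have M : ∀ a b : F, a ≠ 0 → f a * f (b * b / a) = f b * f b := by
      intro a b ha
      obtain ⟨d, hd⟩ := hsurj (f b * f b / f a)
      have h1 : f a * f d = f b * f b := by
        rw [hd]; field_simp
        exact mul_div_cancel_left₀ _ (hf0 a ha)
      have h2 := C a b d ha h1
      have h3 : d = b * b / a := by
        rw [eq_div_iff ha, mul_comm]; exact h2
      rw [← h3]; exact h1
    have hmul : ∀ x y : F, f x * f y = c * f (x * y) := by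
      intro x y
      rcases eq_or_ne x 0 with rfl | hx
      · simp [hF0]
      rcases eq_or_ne y 0 with rfl | hy
      · simp [hF0]
      obtain ⟨b, hb⟩ := stmt0_sq_surj h2 (x * y)
      simp only at hb
      have hb' : b * b = x * y := by rw [← hb]; ring
      have h1 := M x b hx
      have h2 := M 1 b one_ne_zero
      rw [show b * b / x = y by rw [hb']; field_simp] at h1
      rw [show b * b / 1 = x * y by rw [hb', div_one]] at h2
      rw [h1, ← h2, hc]
    -- the unit monoid hom
    have hg0 : ∀ u : Fˣ, c⁻¹ * f u ≠ 0 :=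
      fun u => mul_ne_zero (inv_ne_zero hc0) (hf0 u u.ne_zero)
    let σ : Fˣ →* Fˣ :=
      { toFun := fun u => Units.mk0 (c⁻¹ * f u) (hg0 u)
        map_one' := by
          ext
          simp [← hc, inv_mul_cancel₀ hc0]
        map_mul' := by
          intro u v
          ext
          have := hmul u v
          push_cast [Units.val_mk0]
          field_simp
          linear_combination (-1 : F) * this }
    have hσval : ∀ u : Fˣ, (σ u : F) = c⁻¹ * f u := fun u => rfl
    have hσinj : Function.Injective σ := by
      intro u v huv
      have h1 : c⁻¹ * f u = c⁻¹ * f v := by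
        rw [← hσval, ← hσval, huv]
      exact Units.ext (hinj (mul_left_cancel₀ (inv_ne_zero hc0) h1))
    obtain ⟨m, hσ⟩ := MonoidHom.map_cyclic σ
    have hcardU : Fintype.card Fˣ = 2 ^ k - 1 := by
      rw [Fintype.card_units, hcard]
    have hcardU1 : 1 ≤ Fintype.card Fˣ := Fintype.card_pos
    set n0 : ℕ := (m % (Fintype.card Fˣ : ℤ)).toNat with hn0
    have hmod : ((n0 : ℤ)) = m % (Fintype.card Fˣ : ℤ) := by
      rw [hn0]
      exact Int.toNat_of_nonneg (Int.emod_nonneg m (Int.natCast_ne_zero.mpr (by omega)))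
    have hσ' : ∀ u : Fˣ, σ u = u ^ n0 := by
      intro u
      rw [hσ u, zpow_eq_zpow_emod' m (pow_card_eq_one (x := u)), ← hmod, zpow_natCast]
    have hn0lt : n0 < Fintype.card Fˣ := by
      have : m % (Fintype.card Fˣ : ℤ) < (Fintype.card Fˣ : ℤ) :=
        Int.emod_lt_of_pos m (by exact_mod_cast hcardU1)
      omega
    have hcop : Nat.gcd n0 (Fintype.card Fˣ) = 1 := by
      by_contra hgcd
      obtain ⟨p, hp, hpdvd⟩ := Nat.exists_prime_and_dvd hgcd
      have hpn : p ∣ n0 := hpdvd.trans (Nat.gcd_dvd_left _ _)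
      have hpc : p ∣ Fintype.card Fˣ := hpdvd.trans (Nat.gcd_dvd_right _ _)
      haveI : Fact p.Prime := ⟨hp⟩
      obtain ⟨u, hu⟩ := exists_prime_orderOf_dvd_card p hpc
      have hu1 : u ≠ 1 := by
        intro h
        rw [h, orderOf_one] at hu
        exact hp.one_lt.ne hu
      apply hu1
      apply hσinj
      rw [hσ' u, map_one]
      obtain ⟨t, ht⟩ := hpn
      rw [ht, pow_mul, ← hu, pow_orderOf_eq_one, one_pow]
    -- choose the exponent
    refine ⟨c, if n0 = 0 then 1 else n0, hc0, ?_, ?_, ?_, ?_⟩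
    · split <;> omega
    · split
      · omega
      · omega
    · split
      · rename_i h
        rw [h] at hcop
        simp [Nat.gcd_zero_left] at hcop
        rw [hcardU] at hcop
        simp [hcop]
      · rw [← hcardU]; exact hcop
    · intro x
      rcases eq_or_ne x 0 with rfl | hx
      · rw [hF0, zero_pow (by split <;> omega), mul_zero]
      · have hux := hσ' (Units.mk0 x hx)
        have hval : c⁻¹ * f x = x ^ n0 := by
          have := congrArg Units.val hux
          rw [hσval] at this
          simpa using this
        have hxn : x ^ (if n0 = 0 then 1 else n0) = x ^ n0 := by
          split
          · rename_i h
            rw [h] at hcop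
            simp [Nat.gcd_zero_left] at hcop
            -- card Fˣ = 1, so x = 1
            have hsub : Subsingleton Fˣ := Fintype.card_le_one_iff_subsingleton.mp (le_of_eq hcop)
            have : Units.mk0 x hx = 1 := Subsingleton.elim _ _
            have hx1 : x = 1 := by simpa using congrArg Units.val this
            rw [hx1]; simp
          · rfl
        rw [hxn, ← hval, ← mul_assoc, mul_inv_cancel₀ hc0, one_mul]
  · rintro ⟨c, n, hc0, hn1, hnle, hgcd, hf⟩
    have hpow : Function.Injective fun x : F => x ^ n := by
      apply stmt0_pow_inj hn1
      rw [hcard]; exact hgcd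
    intro A hA
    rw [stmt0_isPosDef_iff h2] at hA ⊢
    obtain ⟨hsym, h1, h3⟩ := hA
    have hE : ∀ i j, entrywiseMap f A i j = f (A i j) := fun i j => rfl
    refine ⟨?_, ?_, ?_⟩
    · unfold Matrix.IsSymm at hsym ⊢
      ext i j
      rw [Matrix.transpose_apply, hE, hE]
      congr 1
      have := congrFun (congrFun hsym j) i
      rw [Matrix.transpose_apply] at this
      exact this.symm
    · rw [hE, hf]
      exact mul_ne_zero hc0 (pow_ne_zero _ h1)
    · simp only [hE, hf]
      intro hEq
      apply h3
      rw [sub_eq_zero] at hEq ⊢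
      apply hpow
      simp only
      have hc2 : c * c ≠ 0 := mul_ne_zero hc0 hc0
      apply mul_left_cancel₀ hc2
      calc c * c * (A 0 0 * A 1 1) ^ n
          = c * A 0 0 ^ n * (c * A 1 1 ^ n) := by rw [mul_pow]; ring
        _ = c * A 0 1 ^ n * (c * A 1 0 ^ n) := hEq
        _ = c * c * (A 0 1 * A 1 0) ^ n := by rw [mul_pow]; ring
end

section
/- Let q = 2^k for a positive integer k, and let f : F_q → F_q. Then f preserves positivity on M_3(F_q) if and only if there exist c ∈ F_q with c ≠ 0 and an integer ℓ with 0 ≤ ℓ ≤ k−1 such that f(x) = c·x^{2^ℓ} for all x ∈ F_q, i.e., f is a nonzero multiple of a field automorphism of F_q. -/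
section aux

set_option linter.unusedSectionVars false

variable {F : Type*} [Field F]

lemma charP2_of_card {k : ℕ} [Fintype F] (hcard : Fintype.card F = 2 ^ k) : CharP F 2 := by
  obtain ⟨p, hpI⟩ := CharP.exists F
  obtain ⟨n, hp, hc⟩ := FiniteField.card F p
  have hp2 : p = 2 := by
    have hdvd : p ∣ 2 ^ k := by
      rw [← hcard, hc]; exact dvd_pow_self p n.2.ne'
    exact (Nat.prime_dvd_prime_iff_eq hp Nat.prime_two).mp (hp.dvd_of_dvd_pow hdvd)
  subst hp2; exact hpI

lemma sq_inj (h2 : (2:F) = 0) {y z : F} (h : y ^ 2 = z ^ 2) : y = z := by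
  have h0 : (y - z) ^ 2 = 0 := by linear_combination h + (z^2 - y*z) * h2
  have h1 : y - z = 0 := pow_eq_zero_iff (n := 2) (by norm_num) |>.mp h0
  linear_combination h1

lemma sq_surj [Fintype F] (h2 : (2:F) = 0) : Function.Surjective (fun y : F => y ^ 2) :=
  Finite.surjective_of_injective (fun _ _ h => sq_inj h2 h)

lemma isPos_iff [Fintype F] (h2 : (2:F) = 0) (x : F) : IsPos x ↔ x ≠ 0 := by
  constructor
  · rintro ⟨y, hy, rfl⟩; exact pow_ne_zero 2 hy
  · intro hx
    obtain ⟨y, hy⟩ := sq_surj h2 x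
    exact ⟨y, fun h => hx (by rw [← hy, h]; ring), hy⟩

lemma leadingMinor0 (A : Matrix (Fin 3) (Fin 3) F) : leadingMinor A 0 = A 0 0 := by
  rw [leadingMinor, Matrix.det_fin_one]; rfl

lemma leadingMinor1 (A : Matrix (Fin 3) (Fin 3) F) :
    leadingMinor A 1 = A 0 0 * A 1 1 - A 0 1 * A 1 0 := by
  rw [leadingMinor, Matrix.det_fin_two]; rfl

lemma leadingMinor2 (A : Matrix (Fin 3) (Fin 3) F) : leadingMinor A 2 = A.det := by
  rw [leadingMinor, Matrix.det_fin_three, Matrix.det_fin_three]; rfl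

lemma isPosDef3 [Fintype F] (h2 : (2:F) = 0) (A : Matrix (Fin 3) (Fin 3) F) (hA : A.IsSymm) :
    IsPosDef A ↔ (A 0 0 ≠ 0 ∧ A 0 0 * A 1 1 - A 0 1 * A 1 0 ≠ 0 ∧ A.det ≠ 0) := by
  constructor
  · rintro ⟨-, h⟩
    refine ⟨?_, ?_, ?_⟩
    · rw [← leadingMinor0 A]; exact (isPos_iff h2 _).mp (h 0)
    · rw [← leadingMinor1 A]; exact (isPos_iff h2 _).mp (h 1)
    · rw [← leadingMinor2 A]; exact (isPos_iff h2 _).mp (h 2)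
  · rintro ⟨h0, h1, h2'⟩
    refine ⟨hA, fun r => (isPos_iff h2 _).mpr ?_⟩
    fin_cases r
    · show leadingMinor A 0 ≠ 0; rwa [leadingMinor0]
    · show leadingMinor A 1 ≠ 0; rwa [leadingMinor1]
    · show leadingMinor A 2 ≠ 0; rwa [leadingMinor2]

/-- The generic symmetric `3 × 3` matrix. -/
def S3 (p u v q w r : F) : Matrix (Fin 3) (Fin 3) F := Matrix.of ![![p,u,v],![u,q,w],![v,w,r]]

lemma S3_symm (p u v q w r : F) : (S3 p u v q w r).IsSymm := by
  rw [Matrix.IsSymm]; ext i j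
  fin_cases i <;> fin_cases j <;> rfl

lemma S3_det (p u v q w r : F) :
    (S3 p u v q w r).det = p*q*r - p*w^2 - q*v^2 - r*u^2 + 2*(u*v*w) := by
  rw [Matrix.det_fin_three]
  show p*q*r - p*w*w - u*u*r + u*w*v + v*u*w - v*q*v = _; ring

lemma S3_map (f : F → F) (p u v q w r : F) :
    entrywiseMap f (S3 p u v q w r) = S3 (f p) (f u) (f v) (f q) (f w) (f r) := by
  ext i j
  fin_cases i <;> fin_cases j <;> rfl

lemma S3_posdef [Fintype F] (h2 : (2:F) = 0) (p u v q w r : F) :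
    IsPosDef (S3 p u v q w r) ↔
      (p ≠ 0 ∧ p * q - u ^ 2 ≠ 0 ∧ p*q*r + p*w^2 + q*v^2 + r*u^2 ≠ 0) := by
  rw [isPosDef3 h2 _ (S3_symm p u v q w r)]
  have e0 : (S3 p u v q w r) 0 0 = p := rfl
  have e1 : (S3 p u v q w r) 0 0 * (S3 p u v q w r) 1 1
      - (S3 p u v q w r) 0 1 * (S3 p u v q w r) 1 0 = p * q - u ^ 2 := by
    show p * q - u * u = p * q - u ^ 2; ring
  have e2 : (S3 p u v q w r).det = p*q*r + p*w^2 + q*v^2 + r*u^2 := by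
    rw [S3_det]; linear_combination (u*v*w - p*w^2 - q*v^2 - r*u^2) * h2
  rw [e2, e1, e0]

/-- squaring is injective on `F[X]` in characteristic two -/
lemma polysq_inj (h2 : (2:F) = 0) {P Q : Polynomial F} (h : P ^ 2 = Q ^ 2) : P = Q := by
  have h20 : (2 : Polynomial F) = 0 := by
    have : ((2:ℕ) : Polynomial F) = Polynomial.C ((2:ℕ) : F) := by
      rw [Polynomial.C_eq_natCast]
    simpa [h2] using this
  have h0 : (P - Q) * (P + Q) = 0 := by ring_nf; linear_combination h
  rcases mul_eq_zero.mp h0 with h' | h'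
  · linear_combination h'
  · -- P + Q = 0, char 2 : P = Q
    have : P = -Q := by linear_combination h'
    rw [this]
    have : -Q = Q - 2 * Q := by ring
    rw [this, h20]; ring

/-- If `(X+1)^m = X^m + 1` in `F[X]`, `char F = 2`, `m ≥ 1`, then `m` is a power of `2`. -/
lemma pow2_of_poly [CharP F 2] :
    ∀ m : ℕ, 1 ≤ m → ((Polynomial.X + 1 : Polynomial F) ^ m = Polynomial.X ^ m + 1) →
      ∃ ℓ : ℕ, m = 2 ^ ℓ := by
  have h2 : (2:F) = 0 := CharP.cast_eq_zero F 2
  intro m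
  induction m using Nat.strong_induction_on with
  | _ m IH =>
    intro hm1 hpoly
    rcases Nat.even_or_odd m with he | ho
    · obtain ⟨m', rfl⟩ := he
      have hm' : 1 ≤ m' := by omega
      have h20 : (2 : Polynomial F) = 0 := by
        have : ((2:ℕ) : Polynomial F) = Polynomial.C ((2:ℕ) : F) := by
          rw [Polynomial.C_eq_natCast]
        simpa [h2] using this
      have l1 : ((Polynomial.X + 1 : Polynomial F) ^ m') ^ 2
          = (Polynomial.X + 1 : Polynomial F) ^ (m' + m') := by rw [pow_add]; ring
      have l2 : ((Polynomial.X : Polynomial F) ^ m' + 1) ^ 2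
          = (Polynomial.X : Polynomial F) ^ (m' + m') + 1 := by
        linear_combination (Polynomial.X ^ m' : Polynomial F) * h20
      have hL : ((Polynomial.X + 1 : Polynomial F) ^ m') ^ 2
          = ((Polynomial.X : Polynomial F) ^ m' + 1) ^ 2 := by
        rw [l1, hpoly, ← l2]
      have := polysq_inj h2 hL
      obtain ⟨ℓ, hℓ⟩ := IH m' (by omega) hm' this
      exact ⟨ℓ + 1, by rw [hℓ]; ring⟩
    · rcases eq_or_lt_of_le hm1 with h1 | h1
      · exact ⟨0, by rw [pow_zero]; omega⟩
      · exfalso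
        have hc : ((Polynomial.X + 1 : Polynomial F) ^ m).coeff 1 = (m.choose 1 : F) :=
          Polynomial.coeff_X_add_one_pow F m 1
        have hc' : ((Polynomial.X ^ m + 1 : Polynomial F)).coeff 1 = 0 := by
          rw [Polynomial.coeff_add, Polynomial.coeff_X_pow, Polynomial.coeff_one]
          have : ¬(1 = m) := by omega
          simp [this]
        rw [hpoly, hc'] at hc
        rw [Nat.choose_one_right] at hc
        have hdd : (2:ℕ) ∣ m := (CharP.cast_eq_zero_iff F 2 m).mp hc.symm
        obtain ⟨t, ht⟩ := ho
        omega

end aux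
theorem stmt1_forward_aux {F : Type*} [Field F] [Fintype F] (k : ℕ) (hk : 1 ≤ k)
    (hcard : Fintype.card F = 2 ^ k) (f : F → F) (h : PreservesPos 3 f) :
      ∃ (c : F) (ℓ : ℕ), c ≠ 0 ∧ ℓ ≤ k - 1 ∧ ∀ x : F, f x = c * x ^ 2 ^ ℓ := by
  haveI hc2 : CharP F 2 := charP2_of_card hcard
  have h2 : (2:F) = 0 := CharP.cast_eq_zero F 2
  -- Step A : f is nonvanishing on nonzero elements
  have hnz : ∀ a : F, a ≠ 0 → f a ≠ 0 := by
    intro a ha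
    have hpd : IsPosDef (S3 a 0 0 1 0 1) := by
      rw [S3_posdef h2]
      refine ⟨ha, by simpa using ha, by simpa using ha⟩
    have hm := h _ hpd
    rw [S3_map] at hm
    exact ((S3_posdef h2 _ _ _ _ _ _).mp hm).1
  -- Step B : 2x2 minor condition
  have h2cond : ∀ a b c : F, a ≠ 0 → a*c - b^2 ≠ 0 → f a * f c - f b ^ 2 ≠ 0 := by
    intro a b c ha habc
    have hpd : IsPosDef (S3 a b 0 c 0 1) := by
      rw [S3_posdef h2]
      refine ⟨ha, habc, ?_⟩
      intro h0
      exact habc (by linear_combination h0 - b^2 * h2)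
    have hm := h _ hpd
    rw [S3_map] at hm
    exact ((S3_posdef h2 _ _ _ _ _ _).mp hm).2.1
  -- Step C : injectivity
  have finj : Function.Injective f := by
    intro a b hab
    by_contra hne
    rcases eq_or_ne a 0 with rfl | ha
    · have hb : b ≠ 0 := fun hb => hne hb.symm
      have key := h2cond b 0 b hb (by
        intro h0
        exact hb (pow_eq_zero_iff (n := 2) (by norm_num) |>.mp (by linear_combination h0)))
      exact key (by rw [hab]; ring)
    · have hne' : a*a - b^2 ≠ 0 := fun h0 => hne (sq_inj h2 (by linear_combination h0))
      exact h2cond a b a ha hne' (by rw [hab]; ring)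
  have fbij : Function.Bijective f := ⟨finj, Finite.surjective_of_injective finj⟩
  have f0 : f 0 = 0 := by
    obtain ⟨x, hx⟩ := fbij.2 0
    rcases eq_or_ne x 0 with rfl | hx0
    · exact hx
    · exact absurd hx (hnz x hx0)
  have f1 : f 1 ≠ 0 := hnz 1 one_ne_zero
  -- Step D : key multiplicative relation
  have fkey : ∀ a c b : F, a ≠ 0 → b ^ 2 = a * c → f a * f c = f b ^ 2 := by
    intro a c b ha hb
    have hsurj : Function.Surjective (fun x : F => f x ^ 2) := (sq_surj h2).comp fbij.2
    obtain ⟨b', hb'⟩ := hsurj (f a * f c)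
    simp only at hb'
    have hac : a * c = b' ^ 2 := by
      by_contra hne
      exact h2cond a b' c ha (fun h0 => hne (by linear_combination h0))
        (by linear_combination -hb')
    have hbb : b = b' := sq_inj h2 (by rw [hb, hac])
    rw [hbb, ← hb']
  have hmulsq : ∀ u : F, u ≠ 0 → f (u^2) * f 1 = f u ^ 2 := by
    intro u hu
    exact fkey (u^2) 1 u (pow_ne_zero 2 hu) (by ring)
  have hmul : ∀ u v : F, u ≠ 0 → v ≠ 0 → f (u*v) * f 1 = f u * f v := by
    intro u v hu hv
    have h1 : f (u^2) * f (v^2) = f (u*v) ^ 2 :=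
      fkey (u^2) (v^2) (u*v) (pow_ne_zero 2 hu) (by ring)
    apply sq_inj h2
    calc (f (u*v) * f 1)^2 = (f (u*v))^2 * (f 1)^2 := by ring
      _ = (f (u^2) * f (v^2)) * (f 1 * f 1) := by rw [← h1]; ring
      _ = (f (u^2) * f 1) * (f (v^2) * f 1) := by ring
      _ = f u ^2 * f v ^2 := by rw [hmulsq u hu, hmulsq v hv]
      _ = (f u * f v)^2 := by ring
  -- Step G : generator
  obtain ⟨ζ, hζ⟩ := IsCyclic.exists_monoid_generator (α := Fˣ)
  have hζF : ∀ x : F, x ≠ 0 → ∃ n : ℕ, x = (ζ : F) ^ n := by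
    intro x hx
    obtain ⟨n, hn⟩ := hζ (Units.mk0 x hx)
    have hn' : ζ ^ n = Units.mk0 x hx := hn
    exact ⟨n, by rw [← Units.val_pow_eq_pow_val, hn', Units.val_mk0]⟩
  set g : F → F := fun x => f x * (f 1)⁻¹ with hg
  have hg1 : g 1 = 1 := by rw [hg]; field_simp
  have hgmul : ∀ u v : F, u ≠ 0 → v ≠ 0 → g (u*v) = g u * g v := by
    intro u v hu hv
    have hh := hmul u v hu hv
    rw [hg]
    field_simp
    linear_combination hh
  have hζ0 : (ζ:F) ≠ 0 := Units.ne_zero ζ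
  have hgpow : ∀ n : ℕ, g ((ζ:F) ^ n) = g (ζ:F) ^ n := by
    intro n
    induction n with
    | zero => simpa using hg1
    | succ n ih =>
      rw [pow_succ, hgmul _ _ (pow_ne_zero n hζ0) hζ0, ih, pow_succ]
  obtain ⟨m, hm⟩ : ∃ m : ℕ, g (ζ:F) = (ζ:F) ^ m := by
    have hgζ : g (ζ:F) ≠ 0 := mul_ne_zero (hnz _ hζ0) (inv_ne_zero f1)
    exact hζF _ hgζ
  have hgx : ∀ x : F, x ≠ 0 → g x = x ^ m := by
    intro x hx
    obtain ⟨n, rfl⟩ := hζF x hx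
    rw [hgpow, hm, ← pow_mul, ← pow_mul, mul_comm]
  -- Step I : normalize the exponent
  set q1 := Fintype.card F - 1 with hq1def
  have hq1pos : 1 ≤ q1 := by
    have h2k : 2 ≤ 2^k := by
      calc 2 = 2^1 := (pow_one 2).symm
      _ ≤ 2^k := Nat.pow_le_pow_right (by norm_num) hk
    rw [hq1def, hcard]; omega
  set m' := if m % q1 = 0 then q1 else m % q1 with hm'def
  have hm'1 : 1 ≤ m' := by rw [hm'def]; split <;> omega
  have hm'q : m' ≤ q1 := by
    rw [hm'def]; split
    · omega
    · have := Nat.mod_lt m (show 0 < q1 by omega); omega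
  have hxq1 : ∀ x : F, x ≠ 0 → x ^ q1 = 1 := fun x hx =>
    FiniteField.pow_card_sub_one_eq_one x hx
  have hgx' : ∀ x : F, x ≠ 0 → g x = x ^ m' := by
    intro x hx
    rw [hgx x hx]
    have hxm : x ^ m = x ^ (m % q1) := by
      conv_lhs => rw [← Nat.div_add_mod m q1]
      rw [pow_add, pow_mul, hxq1 x hx, one_pow, one_mul]
    rw [hm'def]
    split
    · rename_i h0
      rw [hxm, h0, pow_zero, hxq1 x hx]
    · exact hxm
  have hfx : ∀ x : F, f x = f 1 * x ^ m' := by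
    intro x
    rcases eq_or_ne x 0 with rfl | hx
    · rw [f0, zero_pow (by omega), mul_zero]
    · have hthis := hgx' x hx
      rw [hg] at hthis
      simp only at hthis
      field_simp at hthis
      rw [hthis]
  -- Step J : power map bijective
  have hpinj : Function.Injective (fun x : F => x ^ m') := by
    intro x y hxy
    apply finj
    rw [hfx x, hfx y]
    simp only at hxy
    rw [hxy]
  have hpsurj := Finite.surjective_of_injective hpinj
  -- Step K : 3x3 condition
  have h3 : ∀ u v w : F, u ≠ 1 → (1:F) + u + v + w ≠ 0 →
      (1:F) + u^m' + v^m' + w^m' ≠ 0 := by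
    intro u v w hu hsum
    have hpd : IsPosDef (S3 1 u v 1 w 1) := by
      rw [S3_posdef h2]
      refine ⟨one_ne_zero, ?_, ?_⟩
      · intro h0
        exact hu (sq_inj h2 (show u^2 = 1^2 by linear_combination -h0))
      · intro h0
        apply hsum
        have hsq0 : ((1:F)+u+v+w)^2 = 0 := by
          linear_combination h0 + (u+v+w+u*v+u*w+v*w)*h2
        exact pow_eq_zero_iff (n := 2) (by norm_num) |>.mp hsq0
    have hmapped := h _ hpd
    rw [S3_map] at hmapped
    have hdet := ((S3_posdef h2 _ _ _ _ _ _).mp hmapped).2.2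
    intro h0
    apply hdet
    rw [hfx u, hfx v, hfx w]
    linear_combination (f 1^3 * (1 + u^m' + v^m' + w^m')) * h0
      - f 1^3*(u^m' + v^m' + w^m' + u^m'*v^m' + u^m'*w^m' + v^m'*w^m') * h2
  -- Step L : additivity at 1
  have haddpow : ∀ u : F, (u + 1) ^ m' = u ^ m' + 1 := by
    intro u
    rcases eq_or_ne u 1 with rfl | hu
    · have h110 : (1:F) + 1 = 0 := by linear_combination h2
      rw [h110, zero_pow (by omega), one_pow]
      exact h110.symm
    · obtain ⟨v, hv⟩ := hpsurj (u ^ m' + 1)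
      simp only at hv
      have hsum : (1:F) + u + v + 0 = 0 := by
        by_contra hsum
        exact (h3 u v 0 hu hsum)
          (by rw [hv, zero_pow (by omega)]; linear_combination (1 + u^m') * h2)
      have hvu : v = u + 1 := by linear_combination -hsum + v*h2
      rw [← hvu]
      exact hv
  -- Step M : polynomial identity and conclusion
  have hpoly : (Polynomial.X + 1 : Polynomial F) ^ m' = Polynomial.X ^ m' + 1 := by
    have hPz : ((Polynomial.X + 1 : Polynomial F) ^ m' - (Polynomial.X ^ m' + 1)) = 0 := by
      apply Polynomial.eq_zero_of_natDegree_lt_card_of_eval_eq_zero _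
        (f := (id : F → F)) Function.injective_id
      · intro x
        simp only [Polynomial.eval_sub, Polynomial.eval_pow, Polynomial.eval_add,
          Polynomial.eval_X, Polynomial.eval_one, id]
        rw [haddpow x]; ring
      · have hd1 : ((Polynomial.X + 1 : Polynomial F) ^ m').natDegree ≤ m' := by
          refine le_trans (Polynomial.natDegree_pow_le) ?_
          have hX1 : (Polynomial.X + 1 : Polynomial F).natDegree ≤ 1 := by
            refine le_trans (Polynomial.natDegree_add_le _ _) ?_
            simp
          calc m' * (Polynomial.X + 1 : Polynomial F).natDegree ≤ m' * 1 :=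
                Nat.mul_le_mul_left m' hX1
            _ = m' := Nat.mul_one m'
        have hd2 : ((Polynomial.X ^ m' + 1 : Polynomial F)).natDegree ≤ m' := by
          refine le_trans (Polynomial.natDegree_add_le _ _) ?_
          simp [Polynomial.natDegree_X_pow]
        have hcpos : 0 < Fintype.card F := Fintype.card_pos
        calc ((Polynomial.X + 1 : Polynomial F) ^ m' - (Polynomial.X ^ m' + 1)).natDegree
            ≤ max ((Polynomial.X + 1 : Polynomial F) ^ m').natDegree
              ((Polynomial.X ^ m' + 1 : Polynomial F)).natDegree :=
              Polynomial.natDegree_sub_le _ _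
          _ ≤ m' := max_le hd1 hd2
          _ ≤ q1 := hm'q
          _ < Fintype.card F := by omega
    exact sub_eq_zero.mp hPz
  obtain ⟨ℓ, hℓ⟩ := pow2_of_poly (F := F) m' hm'1 hpoly
  have hℓk : ℓ ≤ k - 1 := by
    have hle : 2 ^ ℓ ≤ 2 ^ k - 1 := by
      rw [← hℓ]
      rw [hq1def, hcard] at hm'q
      exact hm'q
    have h2l : 2^ℓ < 2^k := by
      have : 1 ≤ 2^k := Nat.one_le_two_pow
      omega
    have := (Nat.pow_lt_pow_iff_right (by norm_num : 1 < 2)).mp h2l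
    omega
  refine ⟨f 1, ℓ, f1, hℓk, ?_⟩
  intro x
  rw [hfx x, hℓ]
/-- over `F = 𝔽_{2^k}`, `f` preserves positivity on `M_3(F)` iff `f` is a
nonzero multiple of a field automorphism, i.e. `f x = c x^{2^ℓ}` for some `c ≠ 0`
and `0 ≤ ℓ ≤ k − 1`. -/
theorem stmt1 {F : Type*} [Field F] [Fintype F] (k : ℕ) (hk : 1 ≤ k)
    (hcard : Fintype.card F = 2 ^ k) (f : F → F) :
    PreservesPos 3 f ↔
      ∃ (c : F) (ℓ : ℕ), c ≠ 0 ∧ ℓ ≤ k - 1 ∧ ∀ x : F, f x = c * x ^ 2 ^ ℓ := by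
  haveI hc2 : CharP F 2 := charP2_of_card hcard
  have h2 : (2:F) = 0 := CharP.cast_eq_zero F 2
  haveI : Fact (Nat.Prime 2) := ⟨Nat.prime_two⟩
  haveI : ExpChar F 2 := ExpChar.prime Nat.prime_two
  constructor
  · intro h
    exact stmt1_forward_aux k hk hcard f h
  · rintro ⟨c, ℓ, hc, hℓ, hf⟩
    rintro A ⟨hsymm, hmin⟩
    set σ : F →+* F := iterateFrobenius F 2 ℓ with hσdef
    have hσ : ∀ x : F, σ x = x ^ 2 ^ ℓ := fun x => iterateFrobenius_def 2 ℓ x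
    constructor
    · rw [Matrix.IsSymm] at hsymm ⊢
      ext i j
      have hji := congrFun (congrFun hsymm i) j
      rw [Matrix.transpose_apply] at hji ⊢
      show f (A j i) = f (A i j)
      rw [hji]
    · intro r
      rw [isPos_iff h2]
      have key : leadingMinor (entrywiseMap f A) r = c ^ ((r:ℕ)+1) * σ (leadingMinor A r) := by
        rw [leadingMinor, leadingMinor]
        have heq : (entrywiseMap f A).submatrix (Fin.castLE r.isLt) (Fin.castLE r.isLt)
            = c • ((A.submatrix (Fin.castLE r.isLt) (Fin.castLE r.isLt)).map σ) := by
          ext i j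
          simp only [entrywiseMap, Matrix.submatrix_apply, Matrix.map_apply,
            Matrix.smul_apply, Matrix.of_apply, smul_eq_mul, hσ]
          exact hf _
        rw [heq, Matrix.det_smul, RingHom.map_det]
        simp [Fintype.card_fin]
      rw [key]
      have hmr := (isPos_iff h2 _).mp (hmin r)
      exact mul_ne_zero (pow_ne_zero _ hc) (by rw [hσ]; exact pow_ne_zero _ hmr)
end

section
/- Let q be a prime power with q ≡ 1 (mod 4). Then there exists a positive definite matrix A ∈ M_2(F_q) that does not admit a Cholesky decomposition, i.e., there is no lower triangular matrix L ∈ M_2(F_q) with all diagonal entries positive such that A = L·L^T. -/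
/-- if `q ≡ 1 (mod 4)`, there is a positive definite `A ∈ M_2(F_q)` that
admits no Cholesky decomposition `A = L Lᵀ` with `L` lower triangular having positive
diagonal entries. -/
theorem stmt10 {F : Type*} [Field F] [Fintype F] (hq : Fintype.card F % 4 = 1) :
    ∃ A : Matrix (Fin 2) (Fin 2) F, IsPosDef A ∧
      ¬ ∃ L : Matrix (Fin 2) (Fin 2) F,
          (∀ i j : Fin 2, i < j → L i j = 0) ∧ (∀ i : Fin 2, IsPos (L i i)) ∧
          A = L * L.transpose := by
  classical
  obtain ⟨g, hg⟩ := IsCyclic.exists_ofOrder_eq_natCard (α := Fˣ)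
  rw [Nat.card_eq_fintype_card, Fintype.card_units] at hg
  set q := Fintype.card F with hqdef
  obtain ⟨k, hk⟩ : 4 ∣ q - 1 := by
    have h2 : 2 ≤ q := Fintype.one_lt_card
    omega
  have hk1 : 1 ≤ k := by
    have h2 : 2 ≤ q := Fintype.one_lt_card
    omega
  set t : F := ((g : F)) ^ 2 with ht
  refine ⟨!![t, 0; 0, t], ⟨?_, ?_⟩, ?_⟩
  · ext i j
    fin_cases i <;> fin_cases j <;> simp [Matrix.IsSymm]
  · intro r
    fin_cases r
    · refine ⟨(g : F), g.ne_zero, ?_⟩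
      simp [leadingMinor, Matrix.det_fin_one]
      exact ht.symm
    · refine ⟨t, ?_, ?_⟩
      · simp [ht]
      · simp [leadingMinor]
        ring
  · rintro ⟨L, hlt, hdiag, hA⟩
    have h00 : t = L 0 0 ^ 2 := by
      have := congrFun (congrFun hA 0) 0
      simp [Matrix.mul_apply, Fin.sum_univ_two, hlt 0 1 (by norm_num)] at this
      simpa [sq] using this
    obtain ⟨y, hy0, hy2⟩ := hdiag 0
    have hty : t = y ^ 4 := by rw [h00, ← hy2]; ring
    set u : Fˣ := Units.mk0 y hy0 with hu
    have hgu : g ^ 2 = u ^ 4 := by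
      apply Units.ext
      push_cast
      simpa [ht, hu] using hty
    have hgone : g ^ (2 * k) = 1 := by
      have : g ^ (2 * k) = u ^ (4 * k) := by
        rw [pow_mul, pow_mul, hgu]
      rw [this, show 4 * k = q - 1 by omega, ← Fintype.card_units, pow_card_eq_one]
    have hdvd : orderOf g ∣ 2 * k := orderOf_dvd_of_pow_eq_one hgone
    rw [hg] at hdvd
    have := Nat.le_of_dvd (by omega) hdvd
    omega
end

section
/- Let F_q be a finite field with q ≡ 3 (mod 4), and let f : F_q → F_q preserve positivity on M_2(F_q). Then f(0) = 0, f restricts to a bijection of F_q^+ onto F_q^+, and f restricts to a bijection of F_q^- onto F_q^-; in particular f is a bijection of F_q. -/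
open Finset

section Aux

variable {F : Type*} [Field F]

private lemma stmt14_minor0 (M : Matrix (Fin 2) (Fin 2) F) : leadingMinor M 0 = M 0 0 := by
  rw [leadingMinor, Matrix.det_fin_one, Matrix.submatrix_apply]
  rfl

private lemma stmt14_minor1 (M : Matrix (Fin 2) (Fin 2) F) :
    leadingMinor M 1 = M 0 0 * M 1 1 - M 0 1 * M 1 0 := by
  rw [leadingMinor, Matrix.det_fin_two]
  rfl

private lemma stmt14_isPosDef_mk {a b c : F} (h1 : IsPos a) (h2 : IsPos (a * c - b * b)) :
    IsPosDef !![a, b; b, c] := by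
  constructor
  · unfold Matrix.IsSymm
    ext i j
    fin_cases i <;> fin_cases j <;> simp
  · intro r
    fin_cases r
    · rw [show (⟨0, by norm_num⟩ : Fin 2) = 0 from rfl, stmt14_minor0]
      simpa using h1
    · rw [show (⟨1, by norm_num⟩ : Fin 2) = 1 from rfl, stmt14_minor1]
      simpa using h2

private lemma stmt14_isPosDef_elim {M : Matrix (Fin 2) (Fin 2) F} (h : IsPosDef M) :
    IsPos (M 0 0) ∧ IsPos (M 0 0 * M 1 1 - M 0 1 * M 1 0) :=
  ⟨by have := h.2 0; rwa [stmt14_minor0] at this,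
   by have := h.2 1; rwa [stmt14_minor1] at this⟩

private lemma stmt14_key_lemma (f : F → F) (hpres : PreservesPos 2 f) {a b c : F}
    (h1 : IsPos a) (h2 : IsPos (a * c - b * b)) :
    IsPos (f a) ∧ IsPos (f a * f c - f b * f b) := by
  have h := hpres _ (stmt14_isPosDef_mk h1 h2)
  have he := stmt14_isPosDef_elim h
  simpa [entrywiseMap] using he

variable [Fintype F] [DecidableEq F]

private lemma stmt14_isPos_iff {x : F} : IsPos x ↔ quadraticChar F x = 1 := by
  constructor
  · rintro ⟨y, hy, rfl⟩
    exact quadraticChar_sq_one' hy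
  · intro h
    have hx : x ≠ 0 := fun h0 => by
      rw [h0, quadraticChar_zero] at h; exact one_ne_zero h.symm
    obtain ⟨r, hr⟩ := (quadraticChar_one_iff_isSquare hx).mp h
    have hr0 : r ≠ 0 := fun h0 => hx (by rw [hr, h0, mul_zero])
    exact ⟨r, hr0, by rw [sq]; exact hr.symm⟩

private lemma stmt14_chi_neg_one (hq : Fintype.card F % 4 = 3) :
    quadraticChar F (-1) = -1 := by
  apply quadraticChar_neg_one_iff_not_isSquare.mpr
  rw [FiniteField.isSquare_neg_one_iff]
  simp [hq]

omit [DecidableEq F] in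
private lemma stmt14_char_ne_two (hq : Fintype.card F % 4 = 3) : ringChar F ≠ 2 := by
  intro h
  have := FiniteField.even_card_of_char_two h
  omega

private lemma stmt14_chi_inv (x : F) :
    quadraticChar F x⁻¹ = quadraticChar F x := by
  by_cases hx : x = 0
  · rw [hx, inv_zero]
  · have h1 : quadraticChar F x⁻¹ * quadraticChar F x = 1 := by
      rw [← map_mul, inv_mul_cancel₀ hx, map_one]
    rcases quadraticChar_dichotomy (F := F) hx with h | h <;> rw [h] at h1 ⊢ <;> omega

private lemma stmt14_pos_sqrt (hq : Fintype.card F % 4 = 3) {t : F}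
    (ht : quadraticChar F t = 1) :
    ∃ b : F, quadraticChar F b = 1 ∧ b * b = t := by
  have ht0 : t ≠ 0 := fun h0 => by
    rw [h0, quadraticChar_zero] at ht; exact one_ne_zero ht.symm
  obtain ⟨r, hr⟩ := (quadraticChar_one_iff_isSquare ht0).mp ht
  have hr0 : r ≠ 0 := fun h0 => ht0 (by rw [hr, h0, mul_zero])
  rcases quadraticChar_dichotomy (F := F) hr0 with h | h
  · exact ⟨r, h, hr.symm⟩
  · refine ⟨-r, ?_, by rw [neg_mul_neg]; exact hr.symm⟩
    rw [show -r = -1 * r by ring, map_mul, stmt14_chi_neg_one hq, h]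
    norm_num

private lemma stmt14_exists_pos_sum (hq : Fintype.card F % 4 = 3) :
    ∃ s t : F, quadraticChar F s = 1 ∧ quadraticChar F t = 1 ∧
      quadraticChar F (s + t) = -1 := by
  by_contra hco
  push_neg at hco
  have hcard3 : 3 ≤ Fintype.card F := by omega
  have claim : ∀ m : ℕ, ((m : F) = 0 ∨ quadraticChar F (m : F) = 1) := by
    intro m
    induction m with
    | zero => left; exact Nat.cast_zero
    | succ k ih =>
      push_cast
      rcases ih with h | h
      · rw [h, zero_add]; right; exact map_one _
      · by_cases hz : ((k : F) + 1 = 0)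
        · left; exact hz
        · right
          rcases quadraticChar_dichotomy (F := F) hz with h1 | h1
          · exact h1
          · exact absurd h1 (hco (k : F) 1 h (map_one _))
  have hc0 : ((Fintype.card F : ℕ) : F) = 0 := FiniteField.cast_card_eq_zero F
  have hm1 : ((Fintype.card F - 1 : ℕ) : F) = -1 := by
    rw [Nat.cast_sub (by omega : 1 ≤ Fintype.card F), hc0]
    push_cast
    ring
  rcases claim (Fintype.card F - 1) with h | h
  · rw [hm1] at h
    exact one_ne_zero (neg_eq_zero.mp h)
  · rw [hm1, stmt14_chi_neg_one hq] at h
    norm_num at h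

private lemma stmt14_sum_chi_mul (hF : ringChar F ≠ 2) {e : F} (he : e ≠ 0) :
    ∑ a : F, quadraticChar F a * quadraticChar F (a - e) = -1 := by
  have step : ∀ a : F, a ≠ 0 → quadraticChar F a * quadraticChar F (a - e)
      = quadraticChar F (1 - e * a⁻¹) := by
    intro a ha
    have h : a - e = a * (1 - e * a⁻¹) := by field_simp
    rw [h, map_mul, ← mul_assoc, ← pow_two, quadraticChar_sq_one ha, one_mul]
  rw [← Finset.sum_erase (univ : Finset F) (a := 0) (by simp)]
  rw [Finset.sum_congr rfl (fun a ha => step a (Finset.ne_of_mem_erase ha))]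
  rw [Finset.sum_nbij' (i := fun a => 1 - e * a⁻¹) (j := fun b => e * (1 - b)⁻¹)
    (t := (univ : Finset F).erase 1)
    (hi := by
      intro a ha
      simp only [mem_erase, mem_univ, and_true] at ha ⊢
      intro h
      apply ha
      have : e * a⁻¹ = 0 := by linear_combination -h
      rcases mul_eq_zero.mp this with h' | h'
      · exact absurd h' he
      · exact inv_eq_zero.mp h')
    (hj := by
      intro b hb
      simp only [mem_erase, mem_univ, and_true] at hb ⊢
      intro h
      rcases mul_eq_zero.mp h with h' | h'
      · exact he h'
      · exact hb (by
          have := inv_eq_zero.mp h'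
          linear_combination -this))
    (left_neg := by
      intro a ha
      simp only [mem_erase, mem_univ, and_true] at ha
      field_simp
      rw [sub_sub_cancel, div_self he])
    (right_neg := by
      intro b hb
      simp only [mem_erase, mem_univ, and_true] at hb
      have h1 : (1 : F) - b ≠ 0 := fun h => hb (by linear_combination -h)
      field_simp
      ring)
    (h := fun a ha => rfl)]
  rw [Finset.sum_erase_eq_sub (by simp)]
  rw [quadraticChar_sum_zero hF, map_one]
  ring

private lemma stmt14_count_master (hq : Fintype.card F % 4 = 3) {e : F} (he : e ≠ 0)
    {ε : ℤ} (hε : ε = 1 ∨ ε = -1) :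
    4 * (((univ : Finset F).filter
        (fun a => quadraticChar F a = 1 ∧ quadraticChar F (a - e) = ε)).card : ℤ)
      = (Fintype.card F : ℤ) - 2 - quadraticChar F e + ε * quadraticChar F e - ε := by
  classical
  have hF := stmt14_char_ne_two hq
  have hm1 := stmt14_chi_neg_one hq
  have hεz : ε ≠ 0 := by rcases hε with rfl | rfl <;> norm_num
  have h0e : (0 : F) ≠ e := fun h => he h.symm
  set χ := quadraticChar F with hχ
  set s : Finset F := univ \ {0, e} with hs
  have hfilter : (univ : Finset F).filter (fun a => χ a = 1 ∧ χ (a - e) = ε)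
      = s.filter (fun a => χ a = 1 ∧ χ (a - e) = ε) := by
    ext a
    rw [mem_filter, mem_filter]
    constructor
    · rintro ⟨-, h1, h2⟩
      refine ⟨?_, h1, h2⟩
      rw [hs, mem_sdiff]
      refine ⟨mem_univ a, ?_⟩
      simp only [mem_insert, mem_singleton]
      push_neg
      constructor
      · rintro rfl
        rw [hχ, quadraticChar_zero] at h1
        exact one_ne_zero h1.symm
      · rintro rfl
        rw [sub_self, hχ, quadraticChar_zero] at h2
        exact hεz h2.symm
    · rintro ⟨-, h⟩
      exact ⟨mem_univ a, h⟩
  have hpt : ∀ a ∈ s, (1 + χ a) * (1 + ε * χ (a - e))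
      = if (χ a = 1 ∧ χ (a - e) = ε) then 4 else 0 := by
    intro a ha
    simp only [hs, mem_sdiff, mem_insert, mem_singleton, not_or] at ha
    obtain ⟨-, ha0, hae⟩ := ha
    have h1 := quadraticChar_dichotomy (F := F) ha0
    have h2 := quadraticChar_dichotomy (F := F) (sub_ne_zero.mpr hae)
    rw [← hχ] at h1 h2
    rcases h1 with h1 | h1 <;> rcases h2 with h2 | h2 <;> rcases hε with rfl | rfl <;>
      rw [h1, h2] <;> norm_num
  have hsum : ∑ a ∈ s, (1 + χ a) * (1 + ε * χ (a - e))
      = 4 * ((s.filter (fun a => χ a = 1 ∧ χ (a - e) = ε)).card : ℤ) := by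
    rw [Finset.sum_congr rfl hpt, Finset.sum_ite, Finset.sum_const, Finset.sum_const_zero,
      add_zero, nsmul_eq_mul, mul_comm]
  have hexp : ∑ a ∈ s, (1 + χ a) * (1 + ε * χ (a - e))
      = (s.card : ℤ) + (∑ a ∈ s, χ a) + ε * (∑ a ∈ s, χ (a - e))
        + ε * ∑ a ∈ s, χ a * χ (a - e) := by
    have hh : ∀ a ∈ s, (1 + χ a) * (1 + ε * χ (a - e))
        = 1 + χ a + ε * χ (a - e) + ε * (χ a * χ (a - e)) := by intro a _; ring
    rw [Finset.sum_congr rfl hh, Finset.sum_add_distrib, Finset.sum_add_distrib,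
      Finset.sum_add_distrib, Finset.sum_const, ← Finset.mul_sum, ← Finset.mul_sum,
      nsmul_eq_mul, mul_one]
  have hpair : ({0, e} : Finset F) ⊆ univ := subset_univ _
  have hsum1 : ∑ a ∈ s, χ a = -χ e := by
    rw [hs, Finset.sum_sdiff_eq_sub hpair, hχ, quadraticChar_sum_zero hF,
      Finset.sum_pair h0e, quadraticChar_zero]
    ring
  have hshift : ∑ a : F, χ (a - e) = 0 := by
    rw [Fintype.sum_equiv (Equiv.subRight e) (fun a => χ (a - e)) χ (fun a => rfl), hχ,
      quadraticChar_sum_zero hF]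
  have hneg_e : χ (-e) = -χ e := by
    rw [show (-e : F) = -1 * e by ring, map_mul, hm1]
    ring
  have hsum2 : ∑ a ∈ s, χ (a - e) = χ e := by
    rw [hs, Finset.sum_sdiff_eq_sub hpair, hshift, Finset.sum_pair h0e]
    rw [show (0 : F) - e = -e from zero_sub e, sub_self, hχ, quadraticChar_zero, ← hχ, hneg_e]
    ring
  have hsum3 : ∑ a ∈ s, χ a * χ (a - e) = -1 := by
    rw [hs, Finset.sum_sdiff_eq_sub hpair, hχ, stmt14_sum_chi_mul hF he, Finset.sum_pair h0e,
      quadraticChar_zero, sub_self, quadraticChar_zero]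
    ring
  have hcards : (s.card : ℤ) = (Fintype.card F : ℤ) - 2 := by
    rw [hs, Finset.card_sdiff_of_subset hpair, Finset.card_pair h0e, card_univ]
    have h3 : 3 ≤ Fintype.card F := by omega
    push_cast [Nat.cast_sub (by omega : 2 ≤ Fintype.card F)]
    ring
  rw [hfilter, ← hsum, hexp, hsum1, hsum2, hsum3, hcards]
  ring

end Aux

/-- if `q ≡ 3 (mod 4)` and `f` preserves positivity on `M_2(F_q)`, then
`f 0 = 0`, `f` restricts to a bijection of `F_q⁺` onto `F_q⁺` and of `F_q⁻` onto `F_q⁻`;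
in particular `f` is a bijection of `F_q`. -/
theorem stmt14 {F : Type*} [Field F] [Fintype F] (hq : Fintype.card F % 4 = 3)
    (f : F → F) (hpres : PreservesPos 2 f) :
    f 0 = 0 ∧ Set.BijOn f {x : F | IsPos x} {x : F | IsPos x} ∧
      Set.BijOn f {x : F | x ≠ 0 ∧ ¬ IsPos x} {x : F | x ≠ 0 ∧ ¬ IsPos x} ∧
      Function.Bijective f := by
  classical
  have hm1 : quadraticChar F (-1) = -1 := stmt14_chi_neg_one hq
  have hchi0 : ∀ x : F, quadraticChar F x = 1 → x ≠ 0 := by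
    intro x hx h0
    rw [h0, quadraticChar_zero] at hx
    exact one_ne_zero hx.symm
  have hchi0' : ∀ x : F, quadraticChar F x = -1 → x ≠ 0 := by
    intro x hx h0
    rw [h0, quadraticChar_zero] at hx
    norm_num at hx
  -- the key consequence of preserving positivity
  have key : ∀ a b c : F, quadraticChar F a = 1 →
      quadraticChar F (a * c - b * b) = 1 →
      quadraticChar F (f a) = 1 ∧ quadraticChar F (f a * f c - f b * f b) = 1 := by
    intro a b c h1 h2
    obtain ⟨k1, k2⟩ := stmt14_key_lemma f hpres (stmt14_isPos_iff.mpr h1)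
      (stmt14_isPos_iff.mpr h2)
    exact ⟨stmt14_isPos_iff.mp k1, stmt14_isPos_iff.mp k2⟩
  -- squares of positives are positive
  have hsq1 : ∀ a : F, quadraticChar F a = 1 → quadraticChar F (a * a - 0 * 0) = 1 := by
    intro a ha
    rw [mul_zero, sub_zero, map_mul, ha]
    norm_num
  -- Part 1 : f maps positives to positives
  have hmapP : ∀ a : F, quadraticChar F a = 1 → quadraticChar F (f a) = 1 := by
    intro a ha
    exact (key a 0 a ha (hsq1 a ha)).1
  -- Part 2 : f is injective on positives
  have hinjP : ∀ x y : F, quadraticChar F x = 1 → quadraticChar F y = 1 →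
      f x = f y → x = y := by
    intro x y hx hy hfe
    by_contra hne
    have hsq : x * x - y * y ≠ 0 := by
      intro h
      have h2 : (x - y) * (x + y) = 0 := by linear_combination h
      rcases mul_eq_zero.mp h2 with h' | h'
      · exact hne (sub_eq_zero.mp h')
      · have hxy : x = -y := eq_neg_of_add_eq_zero_left h'
        rw [hxy, show (-y : F) = -1 * y by ring, map_mul, hm1, hy] at hx
        norm_num at hx
    rcases quadraticChar_dichotomy (F := F) hsq with h | h
    · have hk := (key x y x hx h).2
      rw [hfe, sub_self, quadraticChar_zero] at hk
      exact absurd hk (by norm_num)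
    · have hyx : quadraticChar F (y * y - x * x) = 1 := by
        rw [show y * y - x * x = -1 * (x * x - y * y) by ring, map_mul, hm1, h]
        norm_num
      have hk := (key y x y hy hyx).2
      rw [hfe, sub_self, quadraticChar_zero] at hk
      exact absurd hk (by norm_num)
  -- bijectivity on the set of positives
  have hPfin : ({x : F | quadraticChar F x = 1}).Finite := Set.toFinite _
  have hPmap : Set.MapsTo f {x : F | quadraticChar F x = 1}
      {x : F | quadraticChar F x = 1} := fun x hx => hmapP x hx
  have hPinjOn : Set.InjOn f {x : F | quadraticChar F x = 1} :=
    fun x hx y hy => hinjP x y hx hy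
  have hPbij : Set.BijOn f {x : F | quadraticChar F x = 1}
      {x : F | quadraticChar F x = 1} :=
    (Set.Finite.injOn_iff_bijOn_of_mapsTo hPfin hPmap).mp hPinjOn
  -- Part 3 : f 0 = 0
  have hf0 : f 0 = 0 := by
    by_contra h0
    have hex : ∃ v : F, quadraticChar F v = 1 ∧ v * v = f 0 * f 0 := by
      rcases quadraticChar_dichotomy (F := F) h0 with h | h
      · exact ⟨f 0, h, rfl⟩
      · refine ⟨-f 0, ?_, by ring⟩
        rw [show -f 0 = -1 * f 0 by ring, map_mul, hm1, h]
        norm_num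
    obtain ⟨v, hv, hvv⟩ := hex
    obtain ⟨a, ha, hfa⟩ := hPbij.surjOn hv
    have hk := (key a 0 a ha (hsq1 a ha)).2
    rw [hfa, hvv, sub_self, quadraticChar_zero] at hk
    exact absurd hk (by norm_num)
  -- Part 4 : f is nonzero on nonsquares
  have hne0N : ∀ x : F, quadraticChar F x = -1 → f x ≠ 0 := by
    intro x hx hfx
    obtain ⟨s, t, hs, ht, hst⟩ := stmt14_exists_pos_sum hq
    have hx0 : x ≠ 0 := hchi0' x hx
    obtain ⟨b, hbpos, hbb⟩ := stmt14_pos_sqrt hq ht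
    have ha : quadraticChar F ((s + t) * x⁻¹) = 1 := by
      rw [map_mul, hst, stmt14_chi_inv, hx]
      norm_num
    have hcond : quadraticChar F ((s + t) * x⁻¹ * x - b * b) = 1 := by
      rw [hbb, show (s + t) * x⁻¹ * x - t = s by field_simp; ring]
      exact hs
    have hk := (key ((s + t) * x⁻¹) b x ha hcond).2
    rw [hfx, mul_zero, zero_sub] at hk
    have hfb := hmapP b hbpos
    rw [show -(f b * f b) = -1 * (f b * f b) by ring, map_mul, map_mul, hm1, hfb] at hk
    norm_num at hk
  -- Part 5a : f maps nonsquares to nonsquares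
  have hmapN : ∀ x : F, quadraticChar F x = -1 → quadraticChar F (f x) = -1 := by
    intro x hx
    rcases quadraticChar_dichotomy (F := F) (hne0N x hx) with hw | hw
    · exfalso
      have hx0 : x ≠ 0 := hchi0' x hx
      have hw0 : f x ≠ 0 := hne0N x hx
      set A2 := (univ : Finset F).filter
        (fun a => quadraticChar F a = 1 ∧ quadraticChar F (a - x) = -1) with hA2
      set W := (univ : Finset F).filter
        (fun v => quadraticChar F v = 1 ∧ quadraticChar F (v - f x) = 1) with hW
      have hcardA2 : 4 * (A2.card : ℤ) = (Fintype.card F : ℤ) + 1 := by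
        rw [hA2, stmt14_count_master hq hx0 (Or.inr rfl), hx]
        ring
      have hcardW : 4 * (W.card : ℤ) = (Fintype.card F : ℤ) - 3 := by
        rw [hW, stmt14_count_master hq hw0 (Or.inl rfl)]
        ring
      have hle : A2.card ≤ W.card := by
        apply Finset.card_le_card_of_injOn f
        · intro a ha
          rw [hA2, Finset.mem_coe, mem_filter] at ha
          obtain ⟨-, ha1, ha2⟩ := ha
          have hcond : quadraticChar F (a * x - x * x) = 1 := by
            rw [show a * x - x * x = x * (a - x) by ring, map_mul, hx, ha2]
            norm_num
          obtain ⟨k1, k2⟩ := key a x x ha1 hcond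
          rw [hW, Finset.mem_coe, mem_filter]
          refine ⟨mem_univ _, k1, ?_⟩
          rw [show f a * f x - f x * f x = f x * (f a - f x) by ring, map_mul, hw,
            one_mul] at k2
          exact k2
        · intro a ha b hb hab
          rw [Finset.mem_coe, hA2, mem_filter] at ha hb
          exact hinjP a b ha.2.1 hb.2.1 hab
      have hle' : (A2.card : ℤ) ≤ (W.card : ℤ) := by exact_mod_cast hle
      omega
    · exact hw
  -- Part 5b : f is injective on nonsquares
  have hinjN : ∀ n n' : F, quadraticChar F n = -1 → quadraticChar F n' = -1 →
      f n = f n' → n = n' := by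
    intro n n' hn hn' hfe
    by_contra hne
    have hn0 : n ≠ 0 := hchi0' n hn
    have hn'0 : n' ≠ 0 := hchi0' n' hn'
    have hw : quadraticChar F (f n) = -1 := hmapN n hn
    have hw0 : f n ≠ 0 := hne0N n hn
    have hf1 : quadraticChar F (f 1) = 1 := hmapP 1 (map_one _)
    have hf10 : f 1 ≠ 0 := hchi0 _ hf1
    have hnn0 : n * n ≠ 0 := mul_ne_zero hn0 hn0
    have hnn'0 : n' * n' ≠ 0 := mul_ne_zero hn'0 hn'0
    have hww0 : f n * f n ≠ 0 := mul_ne_zero hw0 hw0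
    set B := (univ : Finset F).filter
      (fun a => quadraticChar F a = 1 ∧ quadraticChar F (a - n * n) = 1) with hB
    set B' := (univ : Finset F).filter
      (fun a => quadraticChar F a = 1 ∧ quadraticChar F (a - n' * n') = 1) with hB'
    set C := (univ : Finset F).filter
      (fun v => quadraticChar F v = 1 ∧
        quadraticChar F (v * f 1 - f n * f n) = 1) with hC
    set D := (univ : Finset F).filter
      (fun v => quadraticChar F v = 1 ∧ quadraticChar F (v - f n * f n) = 1) with hD
    have hcB : 4 * (B.card : ℤ) = (Fintype.card F : ℤ) - 3 := by
      rw [hB, stmt14_count_master hq hnn0 (Or.inl rfl)]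
      ring
    have hcB' : 4 * (B'.card : ℤ) = (Fintype.card F : ℤ) - 3 := by
      rw [hB', stmt14_count_master hq hnn'0 (Or.inl rfl)]
      ring
    have hcD : 4 * (D.card : ℤ) = (Fintype.card F : ℤ) - 3 := by
      rw [hD, stmt14_count_master hq hww0 (Or.inl rfl)]
      ring
    have hCD : C.card = D.card := by
      apply Finset.card_nbij' (i := fun v => v * f 1) (j := fun v => v * (f 1)⁻¹)
      · intro v hv
        rw [hC, Finset.mem_coe, mem_filter] at hv
        obtain ⟨-, hv1, hv2⟩ := hv
        rw [hD, Finset.mem_coe, mem_filter]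
        refine ⟨mem_univ _, ?_, hv2⟩
        rw [map_mul, hv1, hf1]
        norm_num
      · intro v hv
        rw [hD, Finset.mem_coe, mem_filter] at hv
        obtain ⟨-, hv1, hv2⟩ := hv
        rw [hC, Finset.mem_coe, mem_filter]
        have hv' : v * (f 1)⁻¹ * f 1 = v := by field_simp
        refine ⟨mem_univ _, ?_, ?_⟩
        · rw [map_mul, hv1, stmt14_chi_inv, hf1]
          norm_num
        · rw [hv']
          exact hv2
      · intro a _
        field_simp
      · intro a _
        field_simp
    have himg : ∀ (m : F), quadraticChar F m = -1 → f m = f n →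
        ((univ : Finset F).filter
          (fun a => quadraticChar F a = 1 ∧ quadraticChar F (a - m * m) = 1)).image f
        = C := by
      intro m hm hfm
      have hmm0 : m * m ≠ 0 := mul_ne_zero (hchi0' m hm) (hchi0' m hm)
      apply Finset.eq_of_subset_of_card_le
      · intro v hv
        rw [Finset.mem_image] at hv
        obtain ⟨a, ha, rfl⟩ := hv
        rw [mem_filter] at ha
        obtain ⟨-, ha1, ha2⟩ := ha
        have hcond : quadraticChar F (a * 1 - m * m) = 1 := by
          rw [mul_one]
          exact ha2
        obtain ⟨k1, k2⟩ := key a m 1 ha1 hcond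
        rw [hC, mem_filter]
        rw [hfm] at k2
        exact ⟨mem_univ _, k1, k2⟩
      · rw [Finset.card_image_of_injOn (fun a ha b hb hab =>
          hinjP a b (mem_filter.mp ha).2.1 (mem_filter.mp hb).2.1 hab)]
        have hcm : 4 * ((((univ : Finset F).filter
            (fun a => quadraticChar F a = 1 ∧
              quadraticChar F (a - m * m) = 1)).card : ℤ))
            = (Fintype.card F : ℤ) - 3 := by
          rw [stmt14_count_master hq hmm0 (Or.inl rfl)]
          ring
        have : (C.card : ℤ) = (D.card : ℤ) := by exact_mod_cast hCD
        omega
    have hBC : B.image f = C := by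
      rw [hB]
      exact himg n hn rfl
    have hB'C : B'.image f = C := by
      rw [hB']
      exact himg n' hn' hfe.symm
    have hBB' : B = B' := by
      ext a
      constructor
      · intro ha
        have hfa : f a ∈ C := hBC ▸ Finset.mem_image_of_mem f ha
        rw [← hB'C, Finset.mem_image] at hfa
        obtain ⟨a', ha', he'⟩ := hfa
        have heq : a' = a := hinjP a' a (mem_filter.mp ha').2.1
          (mem_filter.mp ha).2.1 he'
        rwa [← heq]
      · intro ha
        have hfa : f a ∈ C := hB'C ▸ Finset.mem_image_of_mem f ha
        rw [← hBC, Finset.mem_image] at hfa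
        obtain ⟨a', ha', he'⟩ := hfa
        have heq : a' = a := hinjP a' a (mem_filter.mp ha').2.1
          (mem_filter.mp ha).2.1 he'
        rwa [← heq]
    have hsqe : n * n = n' * n' := by
      by_contra hne2
      have hd : n' * n' - n * n ≠ 0 := sub_ne_zero.mpr (fun h => hne2 h.symm)
      have hposn : quadraticChar F (n * n) = 1 := by
        rw [map_mul, hn]; norm_num
      have hposn' : quadraticChar F (n' * n') = 1 := by
        rw [map_mul, hn']; norm_num
      rcases quadraticChar_dichotomy (F := F) hd with h | h
      · have hmem : n' * n' ∈ B := by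
          rw [hB, mem_filter]
          exact ⟨mem_univ _, hposn', h⟩
        rw [hBB', hB', mem_filter] at hmem
        have := hmem.2.2
        rw [sub_self, quadraticChar_zero] at this
        exact absurd this (by norm_num)
      · have h2 : quadraticChar F (n * n - n' * n') = 1 := by
          rw [show n * n - n' * n' = -1 * (n' * n' - n * n) by ring, map_mul, hm1, h]
          norm_num
        have hmem : n * n ∈ B' := by
          rw [hB', mem_filter]
          exact ⟨mem_univ _, hposn, h2⟩
        rw [← hBB', hB, mem_filter] at hmem
        have := hmem.2.2
        rw [sub_self, quadraticChar_zero] at this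
        exact absurd this (by norm_num)
    have hfac : (n - n') * (n + n') = 0 := by linear_combination hsqe
    rcases mul_eq_zero.mp hfac with h | h
    · exact hne (sub_eq_zero.mp h)
    · have hnn' : n = -n' := eq_neg_of_add_eq_zero_left h
      rw [hnn', show (-n' : F) = -1 * n' by ring, map_mul, hm1, hn'] at hn
      norm_num at hn
  -- set identifications
  have hPset : {x : F | IsPos x} = {x : F | quadraticChar F x = 1} := by
    ext x
    exact stmt14_isPos_iff
  have hNset : {x : F | x ≠ 0 ∧ ¬ IsPos x} = {x : F | quadraticChar F x = -1} := by
    ext x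
    simp only [Set.mem_setOf_eq]
    constructor
    · rintro ⟨hx0, hxp⟩
      rcases quadraticChar_dichotomy (F := F) hx0 with h | h
      · exact absurd (stmt14_isPos_iff.mpr h) hxp
      · exact h
    · intro h
      exact ⟨hchi0' x h, fun hp => by
        rw [stmt14_isPos_iff.mp hp] at h
        norm_num at h⟩
  have hNbij : Set.BijOn f {x : F | quadraticChar F x = -1}
      {x : F | quadraticChar F x = -1} :=
    (Set.Finite.injOn_iff_bijOn_of_mapsTo (Set.toFinite _)
      (fun x hx => hmapN x hx)).mp (fun x hx y hy => hinjN x y hx hy)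
  -- injectivity of f on all of F
  have hinj : Function.Injective f := by
    intro x y hxy
    have tri : ∀ z : F, z = 0 ∨ quadraticChar F z = 1 ∨ quadraticChar F z = -1 := by
      intro z
      by_cases h : z = 0
      · exact Or.inl h
      · exact Or.inr (quadraticChar_dichotomy h)
    rcases tri x with rfl | hx | hx <;> rcases tri y with rfl | hy | hy
    · rfl
    · have h := hmapP y hy
      rw [← hxy, hf0, quadraticChar_zero] at h
      exact absurd h (by norm_num)
    · have h := hmapN y hy
      rw [← hxy, hf0, quadraticChar_zero] at h
      exact absurd h (by norm_num)
    · have h := hmapP x hx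
      rw [hxy, hf0, quadraticChar_zero] at h
      exact absurd h (by norm_num)
    · exact hinjP x y hx hy hxy
    · have h1 := hmapP x hx
      have h2 := hmapN y hy
      rw [hxy, h2] at h1
      exact absurd h1 (by norm_num)
    · have h := hmapN x hx
      rw [hxy, hf0, quadraticChar_zero] at h
      exact absurd h (by norm_num)
    · have h1 := hmapN x hx
      have h2 := hmapP y hy
      rw [hxy, h2] at h1
      exact absurd h1 (by norm_num)
    · exact hinjN x y hx hy hxy
  refine ⟨hf0, ?_, ?_, hinj, Finite.surjective_of_injective hinj⟩
  · rw [hPset]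
    exact hPbij
  · rw [hNset]
    exact hNbij
end

section
/- Let q = r^2 where r is a prime power with r ≡ 1 (mod 4), and let F_r denote the unique subfield of F_q with r elements (the fixed field of x ↦ x^r). Suppose u, v ∈ F_q \ F_r are such that for every x ∈ F_r, u − x is a nonzero square in F_q if and only if v − x is a nonzero square in F_q (i.e., u and v have the same F_r-neighborhood in the Paley graph P(q)). Then v = u or v = u^r. -/
private lemma quad_roots_card {K : Type*} [Field K] [Fintype K] [DecidableEq K]
    {a b c : K} (ha : a ≠ 0) :
    (Finset.univ.filter (fun x : K => a * x ^ 2 + b * x + c = 0)).card ≤ 2 := by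
  by_contra h
  push_neg at h
  obtain ⟨t, hts, ht3⟩ := Finset.exists_subset_card_eq
    (show 3 ≤ (Finset.univ.filter (fun x : K => a * x ^ 2 + b * x + c = 0)).card by omega)
  obtain ⟨x, y, z, hxy, hxz, hyz, rfl⟩ := Finset.card_eq_three.mp ht3
  have hx : a * x ^ 2 + b * x + c = 0 :=
    (Finset.mem_filter.mp (hts (by simp : x ∈ ({x, y, z} : Finset K)))).2
  have hy : a * y ^ 2 + b * y + c = 0 :=
    (Finset.mem_filter.mp (hts (by simp : y ∈ ({x, y, z} : Finset K)))).2
  have hz : a * z ^ 2 + b * z + c = 0 :=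
    (Finset.mem_filter.mp (hts (by simp : z ∈ ({x, y, z} : Finset K)))).2
  have key : ∀ u w : K, u ≠ w → a * u ^ 2 + b * u + c = 0 → a * w ^ 2 + b * w + c = 0 →
      a * (u + w) + b = 0 := by
    intro u w huw h1 h2
    have h3 : (u - w) * (a * (u + w) + b) = 0 := by linear_combination h1 - h2
    rcases mul_eq_zero.mp h3 with h4 | h4
    · exact absurd (sub_eq_zero.mp h4) huw
    · exact h4
  have e1 := key x y hxy hx hy
  have e2 := key x z hxz hx hz
  have h5 : a * (y - z) = 0 := by linear_combination e1 - e2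
  rcases mul_eq_zero.mp h5 with h6 | h6
  · exact ha h6
  · exact hyz (sub_eq_zero.mp h6)

private lemma lin_roots_card {K : Type*} [Field K] [Fintype K] [DecidableEq K]
    {b c : K} (hb : b ≠ 0) :
    (Finset.univ.filter (fun x : K => b * x + c = 0)).card ≤ 1 := by
  apply Finset.card_le_one.mpr
  intro x hx y hy
  have hx' := (Finset.mem_filter.mp hx).2
  have hy' := (Finset.mem_filter.mp hy).2
  have h : b * (x - y) = 0 := by linear_combination hx' - hy'
  rcases mul_eq_zero.mp h with h' | h'
  · exact absurd h' hb
  · exact sub_eq_zero.mp h'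

private lemma key_count {K : Type*} [Field K] [Fintype K] [DecidableEq K]
    (t₁ n₁ t₂ n₂ : K) (hne : ¬(t₁ = t₂ ∧ n₁ = n₂)) (hchar : (-1 : K) ≠ 1)
    (hf : ∀ x : K, x ^ 2 - t₁ * x + n₁ ≠ 0)
    (hex : ∀ x : K, ∃ y : K, y ≠ 0 ∧
      y ^ 2 * (x ^ 2 - t₁ * x + n₁) = x ^ 2 - t₂ * x + n₂) : False := by
  set f : K → K := fun x => x ^ 2 - t₁ * x + n₁ with hfdef
  set g : K → K := fun x => x ^ 2 - t₂ * x + n₂ with hgdef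
  set P : Finset (K × K) := Finset.univ.filter (fun p => p.2 ^ 2 * f p.1 = g p.1) with hP
  have two_ne : (2 : K) ≠ 0 := fun h => hchar (by linear_combination -h)
  -- lower bound : card P = 2 * card K
  have hlow : P.card = 2 * Fintype.card K := by
    rw [Finset.card_eq_sum_card_fiberwise
      (f := Prod.fst) (t := Finset.univ) (fun p _ => Finset.mem_univ _)]
    rw [Finset.sum_congr rfl (fun x _ => ?_), Finset.sum_const, smul_eq_mul,
      Finset.card_univ, mul_comm]
    obtain ⟨y₀, hy₀, hy₀eq⟩ := hex x
    have hset : P.filter (fun p => p.1 = x) = {(x, y₀), (x, -y₀)} := by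
      ext ⟨a, b⟩
      simp only [hP, Finset.mem_filter, Finset.mem_univ, true_and, Finset.mem_insert,
        Finset.mem_singleton, Prod.mk.injEq]
      constructor
      · rintro ⟨heq, rfl⟩
        have h1 : (b - y₀) * (b + y₀) * f a = 0 := by linear_combination heq - hy₀eq
        rcases mul_eq_zero.mp h1 with h2 | h2
        · rcases mul_eq_zero.mp h2 with h3 | h3
          · exact Or.inl ⟨rfl, sub_eq_zero.mp h3⟩
          · exact Or.inr ⟨rfl, by linear_combination h3⟩
        · exact absurd h2 (hf a)
      · rintro (⟨rfl, rfl⟩ | ⟨rfl, rfl⟩)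
        · exact ⟨hy₀eq, rfl⟩
        · exact ⟨by linear_combination hy₀eq, rfl⟩
    rw [hset, Finset.card_insert_of_notMem, Finset.card_singleton]
    simp only [Finset.mem_singleton, Prod.mk.injEq, not_and]
    intro _
    intro h
    apply hy₀
    have : (2 : K) * y₀ = 0 := by linear_combination h
    rcases mul_eq_zero.mp this with h' | h'
    · exact absurd h' two_ne
    · exact h'
  -- upper bound
  set c : K → ℕ := fun y => (Finset.univ.filter (fun x : K => y ^ 2 * f x = g x)).card with hc
  have hup : P.card = ∑ y : K, c y := by
    rw [Finset.card_eq_sum_card_fiberwise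
      (f := Prod.snd) (t := Finset.univ) (fun p _ => Finset.mem_univ _)]
    refine Finset.sum_congr rfl (fun y _ => ?_)
    have him : P.filter (fun p => p.2 = y)
        = (Finset.univ.filter (fun x : K => y ^ 2 * f x = g x)).image (fun x => (x, y)) := by
      ext ⟨a, b⟩
      simp only [hP, Finset.mem_filter, Finset.mem_univ, true_and, Finset.mem_image,
        Prod.mk.injEq]
      constructor
      · rintro ⟨heq, rfl⟩; exact ⟨a, heq, rfl, rfl⟩
      · rintro ⟨x, hx, rfl, rfl⟩; exact ⟨hx, rfl⟩
    rw [him, Finset.card_image_of_injective _ (fun a b h => (Prod.ext_iff.mp h).1)]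
  -- bounds on fibers
  have hbound2 : ∀ y : K, y ≠ 1 → y ≠ -1 → c y ≤ 2 := by
    intro y h1 h2
    have ha : y ^ 2 - 1 ≠ 0 := by
      intro h
      rcases mul_eq_zero.mp (show (y - 1) * (y + 1) = 0 by linear_combination h) with h' | h'
      · exact h1 (by linear_combination h')
      · exact h2 (by linear_combination h')
    have hseteq : Finset.univ.filter (fun x : K => y ^ 2 * f x = g x)
        = Finset.univ.filter (fun x : K =>
        (y ^ 2 - 1) * x ^ 2 + (t₂ - y ^ 2 * t₁) * x + (y ^ 2 * n₁ - n₂) = 0) := by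
      ext x
      simp only [Finset.mem_filter, Finset.mem_univ, true_and, hfdef, hgdef]
      constructor
      · intro h; linear_combination h
      · intro h; linear_combination h
    show (Finset.univ.filter (fun x : K => y ^ 2 * f x = g x)).card ≤ 2
    rw [hseteq]
    exact quad_roots_card ha
  have hbound1 : ∀ y : K, y ^ 2 = 1 → c y ≤ 1 := by
    intro y hy2
    have hseteq : Finset.univ.filter (fun x : K => y ^ 2 * f x = g x)
        = Finset.univ.filter (fun x : K => (t₂ - t₁) * x + (n₁ - n₂) = 0) := by
      ext x
      simp only [Finset.mem_filter, Finset.mem_univ, true_and, hfdef, hgdef]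
      constructor
      · intro h; linear_combination h - (x ^ 2 - t₁ * x + n₁) * hy2
      · intro h; linear_combination h + (x ^ 2 - t₁ * x + n₁) * hy2
    show (Finset.univ.filter (fun x : K => y ^ 2 * f x = g x)).card ≤ 1
    rw [hseteq]
    by_cases ht : t₁ = t₂
    · have hn : n₁ ≠ n₂ := fun h => hne ⟨ht, h⟩
      have : (Finset.univ.filter (fun x : K => (t₂ - t₁) * x + (n₁ - n₂) = 0)) = ∅ := by
        apply Finset.filter_false_of_mem
        intro x _
        intro h
        exact hn (by linear_combination h + x * congrArg (fun z => z - t₁) ht)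
      rw [this]; simp
    · exact lin_roots_card (fun h => ht (by linear_combination -h))
  -- combine
  have hm1 : (-1 : K) ∈ Finset.univ.erase (1 : K) :=
    Finset.mem_erase.mpr ⟨hchar, Finset.mem_univ _⟩
  have hsum1 : ∑ y : K, c y = c 1 + ∑ y ∈ Finset.univ.erase 1, c y :=
    (Finset.add_sum_erase _ _ (Finset.mem_univ 1)).symm
  have hsum2 : ∑ y ∈ Finset.univ.erase 1, c y
      = c (-1) + ∑ y ∈ (Finset.univ.erase 1).erase (-1), c y :=
    (Finset.add_sum_erase _ _ hm1).symm
  have hrest := Finset.sum_le_card_nsmul ((Finset.univ.erase (1 : K)).erase (-1)) c 2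
    (by
      intro y hy
      have hy1 := Finset.mem_erase.mp hy
      have hy2 := Finset.mem_erase.mp hy1.2
      exact hbound2 y hy2.1 hy1.1)
  simp only [smul_eq_mul] at hrest
  have hcards : ((Finset.univ.erase (1 : K)).erase (-1)).card = Fintype.card K - 2 := by
    rw [Finset.card_erase_of_mem hm1, Finset.card_erase_of_mem (Finset.mem_univ 1),
      Finset.card_univ]
    omega
  rw [hcards] at hrest
  have hrest' : ∑ y ∈ (Finset.univ.erase (1 : K)).erase (-1), c y
      ≤ (Fintype.card K - 2) * 2 := hrest
  have hK2 : 2 ≤ Fintype.card K := Fintype.one_lt_card_iff.mpr ⟨-1, 1, hchar⟩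
  have hc1 : c 1 ≤ 1 := hbound1 1 (one_pow 2)
  have hcm1 : c (-1) ≤ 1 := hbound1 (-1) (by ring)
  rw [hlow] at *
  omega

open Polynomial

/-- let `q = r²` with `r ≡ 1 (mod 4)` a prime power, and let
`F_r = {x : x^r = x}` be the subfield with `r` elements. If `u, v ∉ F_r` have the same
`F_r`-neighborhood in the Paley graph `P(q)` (i.e. for every `x ∈ F_r`, `u − x` is a
nonzero square iff `v − x` is), then `v = u` or `v = u^r`. -/
theorem stmt18 {F : Type*} [Field F] [Fintype F] (r : ℕ) (hr : IsPrimePow r)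
    (hr4 : r % 4 = 1) (hcard : Fintype.card F = r ^ 2) (u v : F)
    (hu : u ^ r ≠ u) (hv : v ^ r ≠ v)
    (hnbhd : ∀ x : F, x ^ r = x → (IsPos (u - x) ↔ IsPos (v - x))) :
    v = u ∨ v = u ^ r := by
  classical
  obtain ⟨p, k, hp, hk, hpk⟩ := hr
  haveI hfp : Fact p.Prime := ⟨hp.nat_prime⟩
  have hr2 : 2 ≤ r := by
    rw [← hpk]; calc 2 ≤ p := hp.nat_prime.two_le
    _ ≤ p ^ k := Nat.le_self_pow hk.ne' p
  have hrodd : r % 2 = 1 := by omega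
  -- the characteristic is p
  have hr21 : 2 ≤ r ^ 2 := by nlinarith
  have idB : (r - 1) * (r + 1) = r ^ 2 - 1 := by
    zify [show 1 ≤ r by omega, show 1 ≤ r ^ 2 by omega]
    ring
  haveI hcharF : CharP F p := by
    obtain ⟨n, hn, hcn⟩ := FiniteField.card F (ringChar F)
    have hcprime : (ringChar F).Prime := CharP.char_is_prime F (ringChar F)
    have : ringChar F = p := by
      have h1 : ringChar F ∣ p ^ (k * 2) := by
        rw [pow_mul, hpk, ← hcard, hcn]
        exact dvd_pow_self _ n.property.ne'
      have h2 := hcprime.dvd_of_dvd_pow h1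
      exact (Nat.prime_dvd_prime_iff_eq hcprime hp.nat_prime).mp h2
    exact this ▸ ringChar.charP F
  have hfrob : ∀ a b : F, (a + b) ^ r = a ^ r + b ^ r := by
    intro a b
    rw [← hpk]
    exact add_pow_char_pow a b p k
  have hfrobneg : ∀ a : F, (-a) ^ r = -(a ^ r) :=
    fun a => Odd.neg_pow ⟨r / 2, by omega⟩ a
  have hfrobsub : ∀ a b : F, (a - b) ^ r = a ^ r - b ^ r := by
    intro a b
    rw [sub_eq_add_neg, hfrob, hfrobneg, ← sub_eq_add_neg]
  have hq : ∀ x : F, x ^ r ^ 2 = x := by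
    intro x; rw [← hcard]; exact FiniteField.pow_card x
  have hq' : ∀ x : F, (x ^ r) ^ r = x := by
    intro x; rw [← pow_mul, ← pow_two]; exact hq x
  -- the subfield of x with x^r = x
  let K : Subfield F :=
  { carrier := {x : F | x ^ r = x}
    zero_mem' := by simp [zero_pow (by omega : r ≠ 0)]
    one_mem' := by simp
    add_mem' := by
      intro a b ha hb
      simp only [Set.mem_setOf_eq] at *
      rw [hfrob, ha, hb]
    mul_mem' := by
      intro a b ha hb
      simp only [Set.mem_setOf_eq] at *
      rw [mul_pow, ha, hb]
    neg_mem' := by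
      intro a ha
      simp only [Set.mem_setOf_eq] at *
      rw [hfrobneg, ha]
    inv_mem' := by
      intro a ha
      simp only [Set.mem_setOf_eq] at *
      rw [inv_pow, ha] }
  have hmem : ∀ x : F, x ∈ K ↔ x ^ r = x := fun x => Iff.rfl
  letI : Fintype K := Fintype.ofFinite K
  -- cardinality of K is r
  have hcardK : Fintype.card K = r := by
    set P : F[X] := X ^ r - X with hPdef
    have hPdeg : P.natDegree = r := FiniteField.X_pow_card_sub_X_natDegree_eq F (by omega)
    have hPne : P ≠ 0 := FiniteField.X_pow_card_sub_X_ne_zero F (by omega)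
    have hQne : (X ^ r ^ 2 - X : F[X]) ≠ 0 :=
      FiniteField.X_pow_card_sub_X_ne_zero F (by nlinarith)
    have hQdeg : (X ^ r ^ 2 - X : F[X]).natDegree = r ^ 2 :=
      FiniteField.X_pow_card_sub_X_natDegree_eq F (by nlinarith)
    have hQroots : (X ^ r ^ 2 - X : F[X]).roots = Finset.univ.val := by
      have := FiniteField.roots_X_pow_card_sub_X F
      rwa [hcard] at this
    have hPdvd : P ∣ (X ^ r ^ 2 - X : F[X]) := by
      obtain ⟨Q, hQ⟩ := sub_dvd_pow_sub_pow ((X : F[X]) ^ (r - 1)) 1 (r + 1)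
      refine ⟨Q, ?_⟩
      have e1 : (X : F[X]) ^ r ^ 2 = X * X ^ (r ^ 2 - 1) := by
        rw [← pow_succ']; congr 1; omega
      have e2 : (X : F[X]) ^ r = X * X ^ (r - 1) := by
        rw [← pow_succ']; congr 1; omega
      have e3 : ((X : F[X]) ^ (r - 1)) ^ (r + 1) = X ^ (r ^ 2 - 1) := by
        rw [← pow_mul, idB]
      simp only [one_pow] at hQ
      rw [e3] at hQ
      calc (X : F[X]) ^ r ^ 2 - X = X * (X ^ (r ^ 2 - 1) - 1) := by rw [e1]; ring
      _ = X * ((X ^ (r - 1) - 1) * Q) := by rw [← hQ]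
      _ = (X * (X ^ (r - 1) - 1)) * Q := by ring
      _ = P * Q := by rw [hPdef, e2]; ring
    have hQsplits : Splits (X ^ r ^ 2 - X : F[X]) := by
      rw [splits_iff_card_roots, hQroots, hQdeg, ← Finset.card_def, Finset.card_univ, hcard]
    have hPsplits : Splits P :=
      hQsplits.of_dvd hQne hPdvd
    have hProotscard : Multiset.card P.roots = r := by
      rw [splits_iff_card_roots.mp hPsplits, hPdeg]
    have hPnodup : P.roots.Nodup := by
      have hle : P.roots ≤ (X ^ r ^ 2 - X : F[X]).roots :=
        Polynomial.roots.le_of_dvd hQne hPdvd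
      rw [hQroots] at hle
      exact Multiset.nodup_of_le hle Finset.univ.nodup
    have h1 : Fintype.card K = P.roots.toFinset.card := by
      apply Fintype.card_of_subtype
      intro x
      simp only [Multiset.mem_toFinset, mem_roots hPne, hPdef, IsRoot.def, eval_sub, eval_pow,
        eval_X]
      rw [mem_roots (by rw [← hPdef]; exact hPne), IsRoot.def, eval_sub, eval_pow, eval_X]
      rw [hmem, sub_eq_zero]
    rw [h1, Multiset.toFinset_card_of_nodup hPnodup, hProotscard]
  -- characteristic is odd
  have hcharF2 : ringChar F ≠ 2 := by
    intro h
    have h2 := FiniteField.even_card_iff_char_two.mp h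
    rw [hcard] at h2
    have h3 : r ^ 2 % 2 = 1 := by
      rw [Nat.pow_mod, hrodd]
    omega
  have hne1F : (-1 : F) ≠ 1 := Ring.neg_one_ne_one_of_char_ne_two hcharF2
  obtain ⟨e, he⟩ : ∃ e, r = 2 * e + 1 := ⟨r / 2, by omega⟩
  have hsqid : r ^ 2 = 2 * ((r + 1) * e) + 1 := by rw [he]; ring
  have hexp1 : r ^ 2 / 2 = (r + 1) * e := by omega
  -- Euler's criterion in F
  have hEulerF : ∀ z : F, z ≠ 0 → (IsSquare z ↔ z ^ ((r + 1) * e) = 1) := by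
    intro z hz
    rw [← hexp1]
    have h4 := FiniteField.isSquare_iff hcharF2 hz
    rwa [hcard] at h4
  have hIsPos : ∀ z : F, IsPos z ↔ z ≠ 0 ∧ (z ^ (r + 1)) ^ e = 1 := by
    intro z
    rw [← pow_mul]
    constructor
    · rintro ⟨y, hy, rfl⟩
      have hz : y ^ 2 ≠ 0 := pow_ne_zero _ hy
      exact ⟨hz, (hEulerF _ hz).mp ⟨y, sq y⟩⟩
    · rintro ⟨hz, h⟩
      obtain ⟨w, hw⟩ := (hEulerF z hz).mpr h
      exact ⟨w, fun h0 => hz (by rw [hw, h0, mul_zero]), by rw [hw, sq]⟩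
  have pmone : ∀ a : F, a ^ 2 = 1 → a = 1 ∨ a = -1 := by
    intro a h
    have h3 : (a - 1) * (a + 1) = 0 := by linear_combination h
    rcases mul_eq_zero.mp h3 with h4 | h4
    · exact Or.inl (by linear_combination h4)
    · exact Or.inr (by linear_combination h4)
  have hsq1 : ∀ z : F, z ≠ 0 → ((z ^ (r + 1)) ^ e) ^ 2 = 1 := by
    intro z hz
    rw [← pow_mul, ← pow_mul]
    have h5 : (r + 1) * e * 2 = r ^ 2 - 1 := by omega
    rw [show (r + 1) * (e * 2) = (r + 1) * e * 2 by ring, h5]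
    have h6 := FiniteField.pow_card_sub_one_eq_one z hz
    rwa [hcard] at h6
  -- the coefficients of the minimal polynomials lie in K
  have hTm : ∀ w : F, (w + w ^ r) ∈ K := by
    intro w
    rw [hmem, hfrob, hq']
    ring
  have hNm : ∀ w : F, (w * w ^ r) ∈ K := by
    intro w
    rw [hmem, mul_pow, hq']
    ring
  set T1 : K := ⟨u + u ^ r, hTm u⟩ with hT1def
  set N1 : K := ⟨u * u ^ r, hNm u⟩ with hN1def
  set T2 : K := ⟨v + v ^ r, hTm v⟩ with hT2def
  set N2 : K := ⟨v * v ^ r, hNm v⟩ with hN2def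
  -- the norm form of w - x
  have hfe : ∀ w : F, w ^ r ≠ w → ∀ x : F, x ^ r = x →
      (w - x) ^ (r + 1) = x ^ 2 - (w + w ^ r) * x + w * w ^ r ∧ w - x ≠ 0 := by
    intro w hw x hx
    have hwx : w - x ≠ 0 := by
      intro h
      have : w = x := by linear_combination h
      subst this
      exact hw hx
    constructor
    · rw [pow_succ, hfrobsub, hx]
      ring
    · exact hwx
  -- Euler's criterion in K
  have hcharK2 : ringChar K ≠ 2 := by
    intro h
    have h2 := FiniteField.even_card_iff_char_two.mp h
    rw [hcardK] at h2
    omega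
  have hEulerK : ∀ m : K, m ≠ 0 → m ^ e = 1 → IsSquare m := by
    intro m hm h
    refine (FiniteField.isSquare_iff hcharK2 hm).mpr ?_
    rw [hcardK, show r / 2 = e by omega]
    exact h
  have hne1K : (-1 : K) ≠ 1 := by
    intro h
    apply hne1F
    have h2 := congrArg (fun z : K => (z : F)) h
    push_cast at h2
    exact h2
  -- nonvanishing of the quadratic in K
  have hfK : ∀ x : K, x ^ 2 - T1 * x + N1 ≠ 0 := by
    intro x h
    have hx : (x : F) ^ r = (x : F) := (hmem _).mp x.2
    obtain ⟨heq, hne0⟩ := hfe u hu (x : F) hx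
    apply pow_ne_zero (r + 1) hne0
    rw [heq]
    have h2 := congrArg (fun z : K => (z : F)) h
    push_cast [hT1def, hN1def] at h2
    exact h2
  -- the key pointwise hypothesis
  have hex : ∀ x : K, ∃ y : K, y ≠ 0 ∧
      y ^ 2 * (x ^ 2 - T1 * x + N1) = x ^ 2 - T2 * x + N2 := by
    intro x
    have hx : (x : F) ^ r = (x : F) := (hmem _).mp x.2
    obtain ⟨hequ, hneu⟩ := hfe u hu (x : F) hx
    obtain ⟨heqv, hnev⟩ := hfe v hv (x : F) hx
    -- A = 1 iff B = 1
    have hiff := hnbhd (x : F) hx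
    rw [hIsPos, hIsPos] at hiff
    have hiff2 : (((u - (x : F)) ^ (r + 1)) ^ e = 1) ↔
        (((v - (x : F)) ^ (r + 1)) ^ e = 1) := by
      constructor
      · intro h; exact (hiff.mp ⟨hneu, h⟩).2
      · intro h; exact (hiff.mpr ⟨hnev, h⟩).2
    have hA2 := hsq1 (u - (x : F)) hneu
    have hB2 := hsq1 (v - (x : F)) hnev
    have hAB : ((u - (x : F)) ^ (r + 1)) ^ e * ((v - (x : F)) ^ (r + 1)) ^ e = 1 := by
      rcases pmone _ hA2 with hA | hA
      · rw [hA, hiff2.mp hA, one_mul]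
      · rcases pmone _ hB2 with hB | hB
        · exact absurd hA (by rw [hiff2.mpr hB]; exact fun h => hne1F (h ▸ rfl))
        · rw [hA, hB]; ring
    -- build the square in K
    obtain ⟨F1, hF1def⟩ : ∃ y : K, y = x ^ 2 - T1 * x + N1 := ⟨_, rfl⟩
    obtain ⟨F2, hF2def⟩ : ∃ y : K, y = x ^ 2 - T2 * x + N2 := ⟨_, rfl⟩
    have hF1coe : (F1 : F) = (u - (x : F)) ^ (r + 1) := by
      rw [hequ, hF1def]
      push_cast [hT1def, hN1def]
      ring
    have hF2coe : (F2 : F) = (v - (x : F)) ^ (r + 1) := by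
      rw [heqv, hF2def]
      push_cast [hT2def, hN2def]
      ring
    have hF1ne : F1 ≠ 0 := by
      intro h
      apply pow_ne_zero (r + 1) hneu
      rw [← hF1coe, h]
      rfl
    have hF2ne : F2 ≠ 0 := by
      intro h
      apply pow_ne_zero (r + 1) hnev
      rw [← hF2coe, h]
      rfl
    have hMe : (F1 * F2) ^ e = 1 := by
      have hcoe : (((F1 * F2) ^ e : K) : F) = ((1 : K) : F) := by
        push_cast
        rw [hF1coe, hF2coe, mul_pow]
        exact hAB
      exact Subtype.coe_injective hcoe
    have hMne : F1 * F2 ≠ 0 := mul_ne_zero hF1ne hF2ne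
    obtain ⟨c, hc⟩ := hEulerK (F1 * F2) hMne hMe
    have hcne : c ≠ 0 := by
      intro h
      rw [h, mul_zero] at hc
      exact hMne hc
    refine ⟨c / F1, div_ne_zero hcne hF1ne, ?_⟩
    rw [← hF1def, ← hF2def]
    have hkey : c ^ 2 * F1 = F2 * F1 ^ 2 := by
      rw [sq c, sq F1]
      linear_combination (-F1) * hc
    calc (c / F1) ^ 2 * F1 = c ^ 2 * F1 / F1 ^ 2 := by rw [div_pow]; ring
    _ = F2 * F1 ^ 2 / F1 ^ 2 := by rw [hkey]
    _ = F2 := by rw [mul_div_assoc, div_self (pow_ne_zero 2 hF1ne), mul_one]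
  -- apply the counting lemma
  have hcoeff : T1 = T2 ∧ N1 = N2 := by
    by_contra hcon
    exact key_count T1 N1 T2 N2 hcon hne1K hfK hex
  obtain ⟨hT, hN⟩ := hcoeff
  have hT' : u + u ^ r = v + v ^ r := by
    have := congrArg (fun z : K => (z : F)) hT
    push_cast [hT1def, hT2def] at this
    exact this
  have hN' : u * u ^ r = v * v ^ r := by
    have := congrArg (fun z : K => (z : F)) hN
    push_cast [hN1def, hN2def] at this
    exact this
  have hfact : (v - u) * (v - u ^ r) = 0 := by
    linear_combination (-v) * hT' + hN'
  rcases mul_eq_zero.mp hfact with h | h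
  · exact Or.inl (by linear_combination h)
  · exact Or.inr (by linear_combination h)
end
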